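/- arXiv:1802.00647 — 3 statements merged into one kernel-verified Lean document; each statement's English description precedes it below -/
import Mathlib

section
/- Let τ be a finite plane tree with vertices u₀ ≺ u₁ ≺ ⋯ ≺ u_{|τ|−1} listed in lexicographic order, with {Łukasiewicz path W(τ), height function H(τ), and looptree distance H°ᵢ(τ) = d°_τ(root, uᵢ). If uᵢ is an ancestor of uⱼ (with i < j), then |H°ᵢ(τ) − H°ⱼ(τ)| ≤ (Wⱼ(τ) − Wᵢ(τ)) + (Hⱼ(τ) − Hᵢ(τ)). -/
open Finset

/-- A finite plane tree in Neveu's formalism: a finite set of words of positive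
integers (children are labelled `1, …, k`), containing the root `[]`, closed
under taking parents (`dropLast`) and under taking left-siblings. -/
structure PlaneTree where
  verts : Finset (List ℕ)
  root_mem : [] ∈ verts
  parent_mem : ∀ v ∈ verts, v.dropLast ∈ verts
  no_zero : ∀ v : List ℕ, v ++ [0] ∉ verts
  sib_closed : ∀ (v : List ℕ) (i j : ℕ), v ++ [j] ∈ verts → 1 ≤ i → i ≤ j → v ++ [i] ∈ verts

namespace PlaneTree

/-- The number of vertices of a plane tree. -/
def size (τ : PlaneTree) : ℕ := τ.verts.card

/-- The number of children `k_v(τ)` of a vertex `v`. -/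
def numChildren (τ : PlaneTree) (v : List ℕ) : ℕ :=
  (τ.verts.filter (fun w => w ≠ [] ∧ w.dropLast = v)).card

/-- The list of vertices of `τ` in lexicographical order. -/
noncomputable def vertexList (τ : PlaneTree) : List (List ℕ) :=
  τ.verts.sort (· ≤ ·)

/-- The `i`-th vertex of `τ` in lexicographical order. -/
noncomputable def vertex (τ : PlaneTree) (i : ℕ) : List ℕ :=
  (τ.vertexList).getD i []

/-- The height function: the height `|uᵢ|` of the `i`-th vertex in lexicographical order. -/
noncomputable def heightFn (τ : PlaneTree) (i : ℕ) : ℕ := (τ.vertex i).length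

/-- The Łukasiewicz path of `τ`: `W₀ = 0`, `W_{n+1} = Wₙ + k_{uₙ} - 1`. -/
noncomputable def luka (τ : PlaneTree) (n : ℕ) : ℤ :=
  (∑ i ∈ range n, (τ.numChildren (τ.vertex i) : ℤ)) - n

/-- The adjacency relation of the looptree `Loop(τ)`: `u ∼ v` iff `u, v` are consecutive
children of the same parent, or `v` is the first or the last child of `u` (or vice versa). -/
def loopAdj (τ : PlaneTree) (u v : List ℕ) : Prop :=
  u ∈ τ.verts ∧ v ∈ τ.verts ∧ u ≠ v ∧
    ((∃ p i, u = p ++ [i] ∧ v = p ++ [i + 1]) ∨ (∃ p i, v = p ++ [i] ∧ u = p ++ [i + 1]) ∨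
      v = u ++ [1] ∨ u = v ++ [1] ∨
      v = u ++ [τ.numChildren u] ∨ u = v ++ [τ.numChildren v])

/-- The looptree `Loop(τ)`, as a graph on the vertices of `τ`. -/
def loopGraph (τ : PlaneTree) : SimpleGraph (List ℕ) where
  Adj := τ.loopAdj
  symm := by
    constructor
    intro u v h
    obtain ⟨hu, hv, hne, h⟩ := h
    refine ⟨hv, hu, hne.symm, ?_⟩
    rcases h with h | h | h | h | h | h
    · exact Or.inr (Or.inl h)
    · exact Or.inl h
    · exact Or.inr (Or.inr (Or.inr (Or.inl h)))
    · exact Or.inr (Or.inr (Or.inl h))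
    · exact Or.inr (Or.inr (Or.inr (Or.inr (Or.inr h))))
    · exact Or.inr (Or.inr (Or.inr (Or.inr (Or.inl h))))
  loopless := by constructor; intro u h; exact h.2.2.1 rfl

/-- The looptree distance `H°ᵢ(τ) = d°_τ(∅, uᵢ)` from the root to the `i`-th vertex
in lexicographical order. -/
noncomputable def loopHeight (τ : PlaneTree) (i : ℕ) : ℕ :=
  (τ.loopGraph).dist [] (τ.vertex i)

/-- The number of leaves `Λ(τ)`. -/
def numLeaves (τ : PlaneTree) : ℕ :=
  (τ.verts.filter (fun v => τ.numChildren v = 0)).card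

end PlaneTree


namespace PlaneTree

/-! ### Auxiliary lemmas on the lexicographic order on `List ℕ` -/

private lemma aux_lt_append (u : List ℕ) (a : ℕ) (t : List ℕ) : u < u ++ a :: t := by
  show List.Lex (· < ·) u (u ++ a :: t)
  induction u with
  | nil => exact List.Lex.nil
  | cons b u ih => exact List.Lex.cons ih

private lemma aux_le_of_prefix {u w : List ℕ} (h : u <+: w) : u ≤ w := by
  obtain ⟨t, rfl⟩ := h
  cases t with
  | nil => simp
  | cons a t => exact le_of_lt (aux_lt_append u a t)

private lemma aux_lt_mid (q : List ℕ) {a b : ℕ} (r r' : List ℕ) (h : a < b) :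
    q ++ a :: r < q ++ b :: r' :=
  List.Lex.append_left _ (List.Lex.rel h) q

private lemma aux_lt_decomp {u w : List ℕ} (h : u < w) :
    u <+: w ∨ ∃ q a r b r', u = q ++ a :: r ∧ w = q ++ b :: r' ∧ a < b := by
  have h' : List.Lex (· < ·) u w := h
  clear h
  induction h' with
  | nil => left; exact List.nil_prefix
  | @cons a l₁ l₂ h ih =>
      rcases ih with hp | ⟨q, x, r, y, r', rfl, rfl, hxy⟩
      · left; exact List.cons_prefix_cons.2 ⟨rfl, hp⟩
      · right; exact ⟨a :: q, x, r, y, r', by simp, by simp, hxy⟩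
  | @rel a l₁ b l₂ h => right; exact ⟨[], a, l₁, b, l₂, rfl, rfl, h⟩

/-! ### Membership lemmas -/

lemma aux_mem_of_append (τ : PlaneTree) (v : List ℕ) :
    ∀ s, v ++ s ∈ τ.verts → v ∈ τ.verts := by
  intro s
  induction s using List.reverseRecOn with
  | nil => intro h; simpa using h
  | append_singleton s a ih =>
      intro h
      apply ih
      have := τ.parent_mem _ h
      rwa [← List.append_assoc, List.dropLast_concat] at this

lemma aux_child_le (τ : PlaneTree) {v : List ℕ} {m : ℕ} (h : v ++ [m] ∈ τ.verts) :
    1 ≤ m ∧ m ≤ τ.numChildren v := by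
  have h1 : 1 ≤ m := by
    rcases Nat.eq_zero_or_pos m with rfl | h' 
    · exact absurd h (τ.no_zero v)
    · exact h'
  refine ⟨h1, ?_⟩
  have hsub : (Finset.Icc 1 m).image (fun i => v ++ [i]) ⊆
      τ.verts.filter (fun w => w ≠ [] ∧ w.dropLast = v) := by
    intro w hw
    simp only [Finset.mem_image, Finset.mem_Icc] at hw
    obtain ⟨i, ⟨hi1, hi2⟩, rfl⟩ := hw
    refine Finset.mem_filter.2 ⟨τ.sib_closed v i m h hi1 hi2, by simp, by simp⟩
  have hcard := Finset.card_le_card hsub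
  have hinj : Function.Injective (fun i : ℕ => v ++ [i]) := by
    intro a b hab
    simpa using List.append_cancel_left hab
  rwa [Finset.card_image_of_injective _ hinj, Nat.card_Icc, Nat.add_sub_cancel] at hcard

lemma aux_child_mem (τ : PlaneTree) {v : List ℕ} {m : ℕ} (h1 : 1 ≤ m)
    (h2 : m ≤ τ.numChildren v) : v ++ [m] ∈ τ.verts := by
  classical
  set F := τ.verts.filter (fun w => w ≠ [] ∧ w.dropLast = v) with hF
  have hform : ∀ w ∈ F, ∃ x, 1 ≤ x ∧ w = v ++ [x] := by
    intro w hw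
    obtain ⟨hwv, hwne, hwd⟩ := Finset.mem_filter.1 hw
    rcases List.eq_nil_or_concat w with rfl | ⟨L, b, rfl⟩
    · exact absurd rfl hwne
    · rw [List.concat_eq_append] at hwd ⊢
      rw [List.concat_eq_append] at hwv
      rw [List.dropLast_concat] at hwd
      subst hwd
      refine ⟨b, ?_, rfl⟩
      rcases Nat.eq_zero_or_pos b with rfl | h'
      · exact absurd hwv (τ.no_zero _)
      · exact h'
  have hFne : F.Nonempty := Finset.card_pos.1 (lt_of_lt_of_le h1 h2)
  have hGne : (F.image (fun w => w.getD v.length 0)).Nonempty := hFne.image _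
  set M := (F.image (fun w => w.getD v.length 0)).max' hGne with hM
  have hidx : ∀ x : ℕ, (v ++ [x]).getD v.length 0 = x := by
    intro x
    rw [List.getD_eq_getElem _ _ (by simp), List.getElem_append_right (le_refl _)]
    simp
  obtain ⟨w0, hw0F, hw0⟩ := Finset.mem_image.1 ((F.image _).max'_mem hGne)
  obtain ⟨x0, hx01, rfl⟩ := hform w0 hw0F
  have hx0M : x0 = M := by rw [hM, ← hw0, hidx]
  have hMmem : v ++ [M] ∈ τ.verts := by
    rw [← hx0M]; exact (Finset.mem_filter.1 hw0F).1
  have hsub : F ⊆ (Finset.Icc 1 M).image (fun i => v ++ [i]) := by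
    intro w hw
    obtain ⟨x, hx1, rfl⟩ := hform w hw
    have hxM : x ≤ M := by
      have := Finset.le_max' _ ((v ++ [x]).getD v.length 0)
        (Finset.mem_image_of_mem (fun w => w.getD v.length 0) hw)
      rw [hM]
      exact le_trans (le_of_eq (hidx x).symm) this
    exact Finset.mem_image_of_mem _ (Finset.mem_Icc.2 ⟨hx1, hxM⟩)
  have hcard : τ.numChildren v ≤ M := by
    have := Finset.card_le_card hsub
    calc τ.numChildren v = F.card := rfl
      _ ≤ ((Finset.Icc 1 M).image (fun i => v ++ [i])).card := this
      _ ≤ (Finset.Icc 1 M).card := Finset.card_image_le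
      _ = M := by rw [Nat.card_Icc, Nat.add_sub_cancel]
  exact τ.sib_closed v m M hMmem h1 (le_trans h2 hcard)

/-! ### The right cost and walks in the looptree -/

/-- The "right cost" of descending from `v` along the word `s`: at each step, from a vertex
`a` to its child `a ++ [c]`, we pay `k_a + 1 - c` (go to the last child, then walk left). -/
def rcost (τ : PlaneTree) : List ℕ → List ℕ → ℕ
  | _, [] => 0
  | v, c :: s => (τ.numChildren v + 1 - c) + τ.rcost (v ++ [c]) s

lemma rcost_single (τ : PlaneTree) (v : List ℕ) (m : ℕ) :
    τ.rcost v [m] = τ.numChildren v + 1 - m := by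
  simp [rcost]

lemma rcost_append (τ : PlaneTree) : ∀ (s t v : List ℕ),
    τ.rcost v (s ++ t) = τ.rcost v s + τ.rcost (v ++ s) t := by
  intro s
  induction s with
  | nil => intro t v; simp [rcost]
  | cons c s ih =>
      intro t v
      show τ.rcost v (c :: (s ++ t)) = τ.rcost v (c :: s) + τ.rcost (v ++ c :: s) t
      rw [rcost, rcost, ih t (v ++ [c]), add_assoc]
      congr 2
      simp

lemma rcost_full (τ : PlaneTree) : ∀ (s v : List ℕ),
    (∀ t (ht : t < s.length), s[t] = τ.numChildren (v ++ s.take t)) →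
    τ.rcost v s = s.length := by
  intro s
  induction s with
  | nil => intro v _; rfl
  | cons c s ih =>
      intro v h
      have h0 := h 0 (by simp)
      simp only [List.getElem_cons_zero, List.take_zero, List.append_nil] at h0
      have hih : τ.rcost (v ++ [c]) s = s.length := by
        apply ih
        intro t ht
        have := h (t + 1) (by simpa using Nat.succ_lt_succ ht)
        simpa [List.take_succ_cons, List.append_assoc] using this
      rw [rcost, hih, ← h0]
      simp
      omega

lemma aux_walk_desc (τ : PlaneTree) {v : List ℕ} :
    ∀ d c, 1 ≤ c → c + d ≤ τ.numChildren v →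
      ∃ p : τ.loopGraph.Walk (v ++ [c + d]) (v ++ [c]), p.length = d := by
  intro d
  induction d with
  | zero => intro c _ _; exact ⟨SimpleGraph.Walk.nil, rfl⟩
  | succ d ih =>
      intro c h1 h2
      obtain ⟨p, hp⟩ := ih c h1 (by omega)
      have hadj : τ.loopGraph.Adj (v ++ [c + (d + 1)]) (v ++ [c + d]) := by
        refine ⟨τ.aux_child_mem (v := v) (m := c + (d + 1)) (by omega) (by omega),
          τ.aux_child_mem (v := v) (m := c + d) (by omega) (by omega),
          by simp, Or.inr (Or.inl ⟨v, c + d, rfl, by rw [Nat.add_assoc]⟩)⟩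
      exact ⟨SimpleGraph.Walk.cons hadj p, by simp [hp]⟩

lemma aux_walk_step (τ : PlaneTree) {v : List ℕ} {c : ℕ} (hv : v ∈ τ.verts) (h1 : 1 ≤ c)
    (h2 : c ≤ τ.numChildren v) :
    ∃ p : τ.loopGraph.Walk v (v ++ [c]), p.length = τ.numChildren v + 1 - c := by
  obtain ⟨p, hp⟩ := τ.aux_walk_desc (v := v) (τ.numChildren v - c) c h1 (by omega)
  have hk : c + (τ.numChildren v - c) = τ.numChildren v := by omega
  have hadj : τ.loopGraph.Adj v (v ++ [τ.numChildren v]) := by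
    refine ⟨hv, τ.aux_child_mem (v := v) (m := τ.numChildren v) (by omega) le_rfl, by simp, ?_⟩
    exact Or.inr (Or.inr (Or.inr (Or.inr (Or.inl rfl))))
  refine ⟨SimpleGraph.Walk.cons hadj ((p.copy (by rw [hk]) rfl)), ?_⟩
  simp [hp]
  omega

lemma aux_exists_walk (τ : PlaneTree) : ∀ (s v : List ℕ), v ∈ τ.verts → v ++ s ∈ τ.verts →
    ∃ p : τ.loopGraph.Walk v (v ++ s), p.length ≤ τ.rcost v s := by
  intro s
  induction s with
  | nil =>
      intro v hv _
      exact ⟨SimpleGraph.Walk.nil.copy rfl (List.append_nil v).symm, by simp [rcost]⟩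
  | cons c s ih =>
      intro v hv hvs
      have hassoc : (v ++ [c]) ++ s = v ++ (c :: s) := by simp
      have hvc : v ++ [c] ∈ τ.verts := τ.aux_mem_of_append _ s (by rw [hassoc]; exact hvs)
      obtain ⟨hc1, hc2⟩ := τ.aux_child_le hvc
      obtain ⟨p1, hp1⟩ := τ.aux_walk_step hv hc1 hc2
      obtain ⟨p2, hp2⟩ := ih (v ++ [c]) hvc (by rw [hassoc]; exact hvs)
      refine ⟨p1.append (p2.copy rfl hassoc), ?_⟩
      rw [SimpleGraph.Walk.length_append, SimpleGraph.Walk.length_copy, hp1, rcost]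
      omega

/-! ### Lemmas about the lexicographically sorted vertex list -/

lemma aux_vertexList_length (τ : PlaneTree) : τ.vertexList.length = τ.size :=
  Finset.length_sort _

lemma aux_vertex_eq (τ : PlaneTree) {n : ℕ} (h : n < τ.size) :
    τ.vertex n = τ.vertexList[n]'(by rwa [aux_vertexList_length]) :=
  List.getD_eq_getElem _ _ _

lemma aux_vertex_mem (τ : PlaneTree) {n : ℕ} (h : n < τ.size) : τ.vertex n ∈ τ.verts := by
  rw [aux_vertex_eq τ h]
  exact (Finset.mem_sort _).1 (List.getElem_mem _)

lemma aux_sorted (τ : PlaneTree) : ∀ (i j : ℕ) (hi : i < τ.vertexList.length)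
    (hj : j < τ.vertexList.length), i < j → τ.vertexList[i]'hi < τ.vertexList[j]'hj :=
  List.pairwise_iff_getElem.1 (Finset.sortedLT_sort τ.verts).pairwise

lemma aux_vertex_zero (τ : PlaneTree) (h : 0 < τ.size) : τ.vertex 0 = [] := by
  have hm : ([] : List ℕ) ∈ τ.vertexList := (Finset.mem_sort _).2 τ.root_mem
  obtain ⟨n, hn, hg⟩ := List.getElem_of_mem hm
  rw [aux_vertex_eq τ h]
  rcases Nat.eq_zero_or_pos n with rfl | hpos
  · exact hg
  · exfalso
    have hsort := τ.aux_sorted 0 n (by omega) hn hpos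
    rw [hg] at hsort
    exact List.not_lex_nil hsort

lemma aux_vertex_lt (τ : PlaneTree) {n : ℕ} (h : n + 1 < τ.size) :
    τ.vertex n < τ.vertex (n + 1) := by
  rw [aux_vertex_eq τ (by omega), aux_vertex_eq τ h]
  exact τ.aux_sorted n (n + 1) (by rw [aux_vertexList_length]; omega)
    (by rwa [aux_vertexList_length]) (by omega)

lemma aux_vertex_succ_min (τ : PlaneTree) {n : ℕ} (h : n + 1 < τ.size) :
    ∀ w ∈ τ.verts, τ.vertex n < w → τ.vertex (n + 1) ≤ w := by
  intro w hw hlt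
  obtain ⟨m, hm, hg⟩ := List.getElem_of_mem ((Finset.mem_sort (α := List ℕ) (· ≤ ·)).2 hw)
  have hsort := τ.aux_sorted
  by_cases hmn : m ≤ n
  · exfalso
    have : w ≤ τ.vertex n := by
      rw [aux_vertex_eq τ (by omega), ← hg]
      rcases eq_or_lt_of_le hmn with rfl | hlt'
      · exact le_refl _
      · exact le_of_lt (hsort m n hm (by rw [aux_vertexList_length]; omega) hlt')
    exact absurd (lt_of_le_of_lt this hlt) (lt_irrefl w)
  · push_neg at hmn
    rw [aux_vertex_eq τ h, ← hg]
    rcases eq_or_lt_of_le (Nat.succ_le_of_lt hmn) with heq | hlt'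
    · subst heq; exact le_refl _
    · exact le_of_lt (hsort (n + 1) m (by rwa [aux_vertexList_length]) hm hlt')

/-! ### The successor structure -/

lemma aux_no_ext {τ : PlaneTree} {u : List ℕ} (hleaf : τ.numChildren u = 0)
    {w : List ℕ} (hw : w ∈ τ.verts) (huw : u < w) : ¬ (u <+: w) := by
  intro hp
  obtain ⟨s, rfl⟩ := hp
  cases s with
  | nil =>
      rw [List.append_nil] at huw
      exact lt_irrefl _ huw
  | cons c r =>
      have hmem : u ++ [c] ∈ τ.verts := τ.aux_mem_of_append _ r (by simpa using hw)
      obtain ⟨h1, h2⟩ := τ.aux_child_le hmem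
      omega

lemma aux_caseB (τ : PlaneTree) {u : List ℕ} (hu : u ∈ τ.verts) (hleaf : τ.numChildren u = 0)
    {w0 : List ℕ} (hw0 : w0 ∈ τ.verts) (huw0 : u < w0) :
    ∃ (t : ℕ) (ht : t < u.length),
      u[t] < τ.numChildren (u.take t) ∧
      (u.take t ++ [u[t] + 1]) ∈ τ.verts ∧ u < u.take t ++ [u[t] + 1] ∧
      (∀ w ∈ τ.verts, u < w → u.take t ++ [u[t] + 1] ≤ w) ∧
      (∀ t', t < t' → ∀ (ht' : t' < u.length), u[t'] = τ.numChildren (u.take t')) := by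
  classical
  set T : Finset ℕ := (Finset.range u.length).filter
    (fun t => u.getD t 0 < τ.numChildren (u.take t)) with hT
  have hTmem : ∀ t (ht : t < u.length), (t ∈ T ↔ u[t] < τ.numChildren (u.take t)) := by
    intro t ht
    rw [hT, Finset.mem_filter, Finset.mem_range, List.getD_eq_getElem _ _ ht]
    tauto
  -- a good index exists inside any witness of something bigger
  have hgood_of : ∀ w ∈ τ.verts, u < w → ∀ q a r b r', u = q ++ a :: r → w = q ++ b :: r' →
      a < b → q.length ∈ T := by
    intro w hw hlt q a r b r' hu1 hw1 hab
    subst hw1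
    have hq1 : q.length < u.length := by rw [hu1]; simp
    have hqtake : u.take q.length = q := by rw [hu1, List.take_left]
    have hqget : u[q.length]'hq1 = a := by
      subst hu1
      rw [List.getElem_append_right (le_refl _)]
      simp
    have hbmem : q ++ [b] ∈ τ.verts := by
      apply τ.aux_mem_of_append _ r'
      rw [List.append_assoc]
      simpa using hw
    obtain ⟨hb1, hb2⟩ := τ.aux_child_le hbmem
    rw [hTmem _ hq1, hqget, hqtake]
    omega
  have hTne : T.Nonempty := by
    rcases aux_lt_decomp huw0 with hp | ⟨q, a, r, b, r', hu1, hw1, hab⟩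
    · exact absurd hp (aux_no_ext hleaf hw0 huw0)
    · exact ⟨q.length, hgood_of w0 hw0 huw0 q a r b r' hu1 hw1 hab⟩
  set t := T.max' hTne with htdef
  have htT : t ∈ T := T.max'_mem hTne
  have ht : t < u.length := by
    have := htT; rw [hT, Finset.mem_filter, Finset.mem_range] at this; exact this.1
  have hgood : u[t] < τ.numChildren (u.take t) := (hTmem t ht).1 htT
  have hdecomp : u = u.take t ++ u[t] :: u.drop (t + 1) := by
    conv_lhs => rw [← List.take_append_drop t u]
    rw [List.drop_eq_getElem_cons ht]
  have htake1 : u.take (t + 1) = u.take t ++ [u[t]] := by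
    rw [List.take_succ, List.getElem?_eq_getElem ht]
    rfl
  have hσmem : u.take t ++ [u[t] + 1] ∈ τ.verts := by
    apply τ.aux_child_mem (by omega) (by omega)
  have hσgt : u < u.take t ++ [u[t] + 1] := by
    conv_lhs => rw [hdecomp]
    exact aux_lt_mid _ _ _ (Nat.lt_succ_self _)
  refine ⟨t, ht, hgood, hσmem, hσgt, ?_, ?_⟩
  · -- minimality
    intro w hw hlt
    rcases aux_lt_decomp hlt with hp | ⟨q, a, r, b, r', hu1, hw1, hab⟩
    · exact absurd hp (aux_no_ext hleaf hw hlt)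
    · have hqT : q.length ∈ T := hgood_of w hw hlt q a r b r' hu1 hw1 hab
      have hqle : q.length ≤ t := T.le_max' _ hqT
      rcases eq_or_lt_of_le hqle with heq | hlt'
      · -- the first difference is exactly at the deepest good index
        have hq : q = u.take t := by rw [← heq, hu1, List.take_left]
        have haq : u.take t ++ a :: r = u.take t ++ u[t] :: u.drop (t + 1) := by
          conv_lhs => rw [← hq]
          rw [← hu1]
          exact hdecomp
        have ha : a = u[t] := by
          have := List.append_cancel_left haq
          injection this
        subst hw1
        rw [hq]
        rw [← ha]
        rcases eq_or_lt_of_le (Nat.succ_le_of_lt hab) with hb | hb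
        · rw [← hb]
          exact aux_le_of_prefix ⟨r', by simp⟩
        · exact le_of_lt (aux_lt_mid (u.take t) _ _ hb)
      · -- the first difference is above the deepest good index
        subst hw1
        have hutake : u.take t = q ++ a :: (r.take (t - q.length - 1)) := by
          rw [hu1, List.take_append, List.take_of_length_le (le_of_lt hlt')]
          congr 1
          rw [show t - q.length = (t - q.length - 1) + 1 by omega]
          rfl
        rw [hutake, List.append_assoc]
        exact le_of_lt (aux_lt_mid q _ _ hab)
  · -- fullness beyond t
    intro t' htt' ht'
    have hdec' : u = u.take t' ++ u[t'] :: u.drop (t' + 1) := by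
      conv_lhs => rw [← List.take_append_drop t' u]
      rw [List.drop_eq_getElem_cons ht']
    have h1 : u.take t' ++ [u[t']] ∈ τ.verts := by
      apply τ.aux_mem_of_append _ (u.drop (t' + 1))
      rw [List.append_assoc, List.singleton_append, ← hdec']
      exact hu
    obtain ⟨_, h2⟩ := τ.aux_child_le h1
    have h3 : t' ∉ T := fun hmem => absurd (T.le_max' _ hmem) (by omega)
    rw [hTmem _ ht'] at h3
    omega

/-! ### The key identity: `rcost [] uₙ = Wₙ + Hₙ` -/

lemma aux_luka_succ (τ : PlaneTree) (n : ℕ) :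
    τ.luka (n + 1) = τ.luka n + τ.numChildren (τ.vertex n) - 1 := by
  simp only [luka, Finset.sum_range_succ]
  push_cast
  ring

lemma aux_key (τ : PlaneTree) : ∀ n, n < τ.size →
    (τ.rcost [] (τ.vertex n) : ℤ) = τ.luka n + τ.heightFn n := by
  intro n
  induction n with
  | zero =>
      intro h
      simp [rcost, luka, heightFn, aux_vertex_zero τ h]
  | succ n ih =>
      intro h
      have hn : n < τ.size := by omega
      have ihn := ih hn
      have humem : τ.vertex n ∈ τ.verts := τ.aux_vertex_mem hn
      have hwmem : τ.vertex (n + 1) ∈ τ.verts := τ.aux_vertex_mem h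
      have hlt : τ.vertex n < τ.vertex (n + 1) := τ.aux_vertex_lt h
      have hmin := τ.aux_vertex_succ_min h
      have hlu := τ.aux_luka_succ n
      rcases Nat.eq_zero_or_pos (τ.numChildren (τ.vertex n)) with hk | hk
      · -- case B : `uₙ` is a leaf
        obtain ⟨t, ht, hgood, hσmem, hσgt, hσmin, hfull⟩ := τ.aux_caseB humem hk hwmem hlt
        have hHn : τ.heightFn n = (τ.vertex n).length := rfl
        have hweq : τ.vertex (n + 1) = (τ.vertex n).take t ++ [(τ.vertex n)[t]'ht + 1] :=
          le_antisymm (hmin _ hσmem hσgt) (hσmin _ hwmem hlt)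
        have htake1 : (τ.vertex n).take (t + 1) = (τ.vertex n).take t ++ [(τ.vertex n)[t]'ht] := by
          rw [List.take_succ, List.getElem?_eq_getElem ht]
          rfl
        have hdecomp : τ.vertex n = (τ.vertex n).take (t + 1) ++ (τ.vertex n).drop (t + 1) := (List.take_append_drop _ (τ.vertex n)).symm
        have hyp : ∀ t' (ht' : t' < ((τ.vertex n).drop (t + 1)).length),
            ((τ.vertex n).drop (t + 1))[t'] = τ.numChildren ((τ.vertex n).take (t + 1) ++ ((τ.vertex n).drop (t + 1)).take t') := by
          intro t' ht'
          have hlen : t + 1 + t' < (τ.vertex n).length := by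
            have := ht'
            rw [List.length_drop] at this
            omega
          rw [List.getElem_drop, ← List.take_add]
          exact hfull (t + 1 + t') (by omega) hlen
        have hrfull : τ.rcost ((τ.vertex n).take (t + 1)) ((τ.vertex n).drop (t + 1)) = (τ.vertex n).length - (t + 1) := by
          rw [τ.rcost_full _ _ hyp, List.length_drop]
        have hsplit1 : τ.rcost [] (τ.vertex n)
            = τ.rcost [] ((τ.vertex n).take (t + 1)) + τ.rcost ((τ.vertex n).take (t + 1)) ((τ.vertex n).drop (t + 1)) := by
          conv_lhs => rw [hdecomp]
          rw [τ.rcost_append]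
          simp only [List.nil_append]
        have hsplit2 : τ.rcost [] ((τ.vertex n).take (t + 1))
            = τ.rcost [] ((τ.vertex n).take t) + (τ.numChildren ((τ.vertex n).take t) + 1 - (τ.vertex n)[t]'ht) := by
          rw [htake1, τ.rcost_append]
          simp only [List.nil_append, rcost_single]
        have hsplit3 : τ.rcost [] ((τ.vertex n).take t ++ [(τ.vertex n)[t]'ht + 1])
            = τ.rcost [] ((τ.vertex n).take t) + (τ.numChildren ((τ.vertex n).take t) - (τ.vertex n)[t]'ht) := by
          rw [τ.rcost_append]
          simp only [List.nil_append, rcost_single]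
          omega
        have hHn1 : τ.heightFn (n + 1) = t + 1 := by
          show (τ.vertex (n + 1)).length = t + 1
          rw [hweq, List.length_append, List.length_take]
          simp only [List.length_singleton]
          omega
        rw [hweq]
        omega
      · -- case A : `uₙ` has a child
        have hHn : τ.heightFn n = (τ.vertex n).length := rfl
        have h1mem : (τ.vertex n) ++ [1] ∈ τ.verts := τ.aux_child_mem (v := τ.vertex n) (m := 1) le_rfl hk
        have hge1 : ∀ w ∈ τ.verts, τ.vertex n < w → (τ.vertex n) ++ [1] ≤ w := by
          intro w hw hltw
          rcases aux_lt_decomp hltw with hp | ⟨q, a, r, b, r', hu1, hw1, hab⟩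
          · obtain ⟨s, hs⟩ := hp
            cases s with
            | nil =>
                rw [List.append_nil] at hs
                exact absurd hs (ne_of_lt hltw)
            | cons c r2 =>
                have hcmem : (τ.vertex n) ++ [c] ∈ τ.verts := by
                  apply τ.aux_mem_of_append _ r2
                  rw [List.append_assoc, List.singleton_append, hs]
                  exact hw
                obtain ⟨hc1, _⟩ := τ.aux_child_le hcmem
                rcases eq_or_lt_of_le hc1 with hc | hc
                · rw [← hs, ← hc]
                  exact aux_le_of_prefix ⟨r2, by simp⟩
                · rw [← hs]
                  exact le_of_lt (aux_lt_mid (τ.vertex n) [] r2 hc)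
          · subst hw1
            rw [hu1, List.append_assoc]
            exact le_of_lt (aux_lt_mid q _ _ hab)
        have hweq : τ.vertex (n + 1) = (τ.vertex n) ++ [1] :=
          le_antisymm (hmin _ h1mem (aux_lt_append (τ.vertex n) 1 [])) (hge1 _ hwmem hlt)
        have hsplit : τ.rcost [] ((τ.vertex n) ++ [1]) = τ.rcost [] (τ.vertex n) + τ.numChildren (τ.vertex n) := by
          rw [τ.rcost_append]
          simp only [List.nil_append, rcost_single]
          omega
        have hHn1 : τ.heightFn (n + 1) = (τ.vertex n).length + 1 := by
          show (τ.vertex (n + 1)).length = (τ.vertex n).length + 1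
          rw [hweq, List.length_append, List.length_singleton]
        rw [hweq]
        omega


end PlaneTree

open PlaneTree in
/-- If `uᵢ` is an ancestor of `uⱼ` in `τ` (with `i < j`), then
`|H°ᵢ(τ) − H°ⱼ(τ)| ≤ (Wⱼ(τ) − Wᵢ(τ)) + (Hⱼ(τ) − Hᵢ(τ))`. -/
theorem stmt_3 (τ : PlaneTree) (i j : ℕ) (hij : i < j) (hj : j < τ.size)
    (hanc : τ.vertex i <+: τ.vertex j) :
    |(τ.loopHeight i : ℤ) - (τ.loopHeight j : ℤ)| ≤
      (τ.luka j - τ.luka i) + ((τ.heightFn j : ℤ) - (τ.heightFn i : ℤ)) := by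
  have hi : i < τ.size := lt_trans hij hj
  obtain ⟨s, hs⟩ := hanc
  have hki := τ.aux_key i hi
  have hkj := τ.aux_key j hj
  have himem := τ.aux_vertex_mem hi
  have hjmem := τ.aux_vertex_mem hj
  have hrc : τ.rcost [] (τ.vertex j) = τ.rcost [] (τ.vertex i) + τ.rcost (τ.vertex i) s := by
    rw [← hs, τ.rcost_append]
    simp only [List.nil_append]
  obtain ⟨p, hp⟩ := τ.aux_exists_walk s (τ.vertex i) himem (by rw [hs]; exact hjmem)
  obtain ⟨p0, -⟩ := τ.aux_exists_walk (τ.vertex i) [] τ.root_mem (by simpa using himem)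
  have hreach0i : τ.loopGraph.Reachable [] (τ.vertex i) := ⟨p0.copy rfl (by simp)⟩
  have hreachij : τ.loopGraph.Reachable (τ.vertex i) (τ.vertex j) := ⟨p.copy rfl hs⟩
  have hdistij : τ.loopGraph.dist (τ.vertex i) (τ.vertex j) ≤ τ.rcost (τ.vertex i) s := by
    have := SimpleGraph.dist_le (p.copy rfl hs)
    rw [SimpleGraph.Walk.length_copy] at this
    exact le_trans this hp
  have htri1 : τ.loopGraph.dist [] (τ.vertex j)
      ≤ τ.loopGraph.dist [] (τ.vertex i) + τ.loopGraph.dist (τ.vertex i) (τ.vertex j) := by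
    obtain ⟨q1, hq1⟩ := hreach0i.exists_walk_length_eq_dist
    obtain ⟨q2, hq2⟩ := hreachij.exists_walk_length_eq_dist
    have := SimpleGraph.dist_le (q1.append q2)
    rwa [SimpleGraph.Walk.length_append, hq1, hq2] at this
  have htri2 : τ.loopGraph.dist [] (τ.vertex i)
      ≤ τ.loopGraph.dist [] (τ.vertex j) + τ.loopGraph.dist (τ.vertex i) (τ.vertex j) := by
    obtain ⟨q1, hq1⟩ := (hreach0i.trans hreachij).exists_walk_length_eq_dist
    obtain ⟨q2, hq2⟩ := hreachij.symm.exists_walk_length_eq_dist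
    have := SimpleGraph.dist_le (q1.append q2)
    rw [SimpleGraph.Walk.length_append, hq1, hq2,
      SimpleGraph.dist_comm (u := τ.vertex j) (v := τ.vertex i)] at this
    exact this
  have hLHi : τ.loopHeight i = τ.loopGraph.dist [] (τ.vertex i) := rfl
  have hLHj : τ.loopHeight j = τ.loopGraph.dist [] (τ.vertex j) := rfl
  rw [abs_sub_le_iff]
  constructor <;> omega
end

section
/- More generally, with the setup of Kemperman's formula, the probability Ψ_k(n) that k independent BGW_μ trees have total size n equals (k/n) P(Wₙ = −k). -/
open Finset

namespace PlaneTree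

/-- The Bienaymé–Galton–Watson weight of a finite plane tree:
`BGW_μ(τ) = ∏_{u ∈ τ} μ(k_u(τ))`. -/
noncomputable def bgwWeight (μ : ℕ → ℝ) (τ : PlaneTree) : ℝ :=
  ∏ v ∈ τ.verts, μ (τ.numChildren v)

end PlaneTree

/-- `P(Wₙ = -k)` for the left-continuous random walk with i.i.d. steps
`P(W₁ = i) = μ(i+1)`, `i ≥ -1`, started at `0`. -/
noncomputable def walkProb (μ : ℕ → ℝ) (n : ℕ) (k : ℤ) : ℝ :=
  ∑' f : {f : Fin n → ℕ // (∑ i, (f i : ℤ)) = (n : ℤ) - k}, ∏ i, μ (f.1 i)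

namespace PlaneTree

lemma verts_injective : Function.Injective PlaneTree.verts := by
  rintro ⟨⟩ ⟨⟩ h; cases h; rfl

lemma ext' {τ σ : PlaneTree} (h : τ.verts = σ.verts) : τ = σ := verts_injective h

/-- generic: a finset of naturals not containing 0 and closed downward above 1 is `Icc 1 card`. -/
lemma icc_of_downclosed (S : Finset ℕ) (h0 : 0 ∉ S)
    (hdc : ∀ i j, j ∈ S → 1 ≤ i → i ≤ j → i ∈ S) : S = Finset.Icc 1 S.card := by
  rcases S.eq_empty_or_nonempty with rfl | hne
  · simp
  · have hm : S.max' hne ∈ S := S.max'_mem hne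
    have hS : S = Finset.Icc 1 (S.max' hne) := by
      apply Finset.Subset.antisymm
      · intro x hx
        rw [Finset.mem_Icc]
        refine ⟨?_, S.le_max' x hx⟩
        rcases Nat.eq_zero_or_pos x with rfl | h; · exact absurd hx h0
        · exact h
      · intro x hx
        rw [Finset.mem_Icc] at hx
        exact hdc x _ hm hx.1 hx.2
    rw [hS, Nat.card_Icc]
    simp [← hS]

lemma child_mem_iff (τ : PlaneTree) (v : List ℕ) (j : ℕ) :
    v ++ [j] ∈ τ.verts ↔ 1 ≤ j ∧ j ≤ τ.numChildren v := by
  classical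
  set s := τ.verts.filter (fun w => w ≠ [] ∧ w.dropLast = v) with hs
  have key : ∀ w ∈ s, w = v ++ [w.getLast?.getD 0] := by
    intro w hw
    rw [hs, Finset.mem_filter] at hw
    obtain ⟨hwv, hne, hdl⟩ := hw
    conv_lhs => rw [← List.dropLast_append_getLast hne]
    rw [hdl, List.getLast?_eq_getLast hne]
    rfl
  set J := s.image (fun w => w.getLast?.getD 0) with hJ
  have hmem : ∀ i, i ∈ J ↔ v ++ [i] ∈ τ.verts := by
    intro i
    constructor
    · rw [hJ, Finset.mem_image]
      rintro ⟨w, hw, rfl⟩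
      have := key w hw
      rw [hs, Finset.mem_filter] at hw
      rw [← this]; exact hw.1
    · intro h
      rw [hJ, Finset.mem_image]
      refine ⟨v ++ [i], ?_, by rw [List.getLast?_concat]; rfl⟩
      rw [hs, Finset.mem_filter]
      exact ⟨h, by simp, List.dropLast_concat⟩
  have hcard : J.card = τ.numChildren v := by
    rw [hJ, Finset.card_image_of_injOn, numChildren]
    intro w hw w' hw' h
    dsimp only at h
    rw [key w (Finset.mem_coe.mp hw), key w' (Finset.mem_coe.mp hw'), h]
  have h0 : 0 ∉ J := by rw [hmem]; exact τ.no_zero v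
  have hdc : ∀ i j, j ∈ J → 1 ≤ i → i ≤ j → i ∈ J := by
    intro i j hj h1 hij
    rw [hmem] at *
    exact τ.sib_closed v i j hj h1 hij
  rw [← hmem, icc_of_downclosed J h0 hdc, hcard, Finset.mem_Icc]

lemma numChildren_eq_of_iff {τ σ : PlaneTree} {v w : List ℕ}
    (h : ∀ j, v ++ [j] ∈ τ.verts ↔ w ++ [j] ∈ σ.verts) :
    τ.numChildren v = σ.numChildren w := by
  have h1 := (child_mem_iff τ v (τ.numChildren v)).symm.trans  (h _) |>.trans (child_mem_iff σ w _)
  have h2 := (child_mem_iff τ v (σ.numChildren w)).symm.trans (h _) |>.trans (child_mem_iff σ w _)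
  omega

lemma take_mem (τ : PlaneTree) : ∀ (N : ℕ) (w : List ℕ), w ∈ τ.verts → w.length ≤ N →
    ∀ m, w.take m ∈ τ.verts := by
  intro N
  induction N with
  | zero =>
    intro w hw hl m
    have hw0 : w = [] := List.eq_nil_of_length_eq_zero (Nat.le_zero.mp hl)
    subst hw0; simpa using hw
  | succ N ih =>
    intro w hw hl m
    by_cases hm : w.length ≤ m
    · rwa [List.take_of_length_le hm]
    · push_neg at hm
      have h1 : w.take m = w.dropLast.take m := by
        rw [List.dropLast_eq_take, List.take_take]
        congr 1; omega
      rw [h1]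
      refine ih w.dropLast (τ.parent_mem w hw) ?_ m
      rw [List.dropLast_eq_take, List.length_take]; omega

lemma one_le_size (τ : PlaneTree) : 1 ≤ τ.size :=
  Finset.card_pos.mpr ⟨[], τ.root_mem⟩

lemma length_lt_size (τ : PlaneTree) {w : List ℕ} (hw : w ∈ τ.verts) : w.length < τ.size := by
  have hsub : (Finset.range (w.length + 1)).image (fun m => w.take m) ⊆ τ.verts := by
    intro x hx
    rw [Finset.mem_image] at hx
    obtain ⟨m, _, rfl⟩ := hx
    exact take_mem τ w.length w hw le_rfl m
  have hcard : ((Finset.range (w.length + 1)).image (fun m => w.take m)).card = w.length + 1 := by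
    rw [Finset.card_image_of_injOn, Finset.card_range]
    intro a ha b hb hab
    rw [Finset.mem_coe, Finset.mem_range] at ha hb
    dsimp only at hab
    have := congrArg List.length hab
    rw [List.length_take, List.length_take] at this
    omega
  have := Finset.card_le_card hsub
  rw [hcard] at this
  unfold size; omega

lemma numChildren_le (τ : PlaneTree) (v : List ℕ) : τ.numChildren v ≤ τ.size - 1 := by
  have hsub : τ.verts.filter (fun w => w ≠ [] ∧ w.dropLast = v) ⊆ τ.verts.erase [] := by
    intro x hx
    rw [Finset.mem_filter] at hx
    exact Finset.mem_erase.mpr ⟨hx.2.1, hx.1⟩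
  have := Finset.card_le_card hsub
  rw [Finset.card_erase_of_mem τ.root_mem] at this
  exact this

lemma entry_le (τ : PlaneTree) {w : List ℕ} (hw : w ∈ τ.verts) {a : ℕ} (ha : a ∈ w) :
    a ≤ τ.size := by
  rw [List.mem_iff_getElem] at ha
  obtain ⟨i, hi, rfl⟩ := ha
  have h1 : w.take (i + 1) ∈ τ.verts := take_mem τ w.length w hw le_rfl _
  have h2 : w.take (i + 1) = w.take i ++ [w[i]] := by
    rw [List.take_succ, List.getElem?_eq_getElem hi]
    rfl
  rw [h2, child_mem_iff] at h1
  calc w[i] ≤ τ.numChildren (w.take i) := h1.2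
    _ ≤ τ.size - 1 := numChildren_le τ _
    _ ≤ τ.size := Nat.sub_le _ _

instance finite_size_le (m : ℕ) : Finite {τ : PlaneTree // τ.size ≤ m} := by
  set S : Set (List ℕ) := {l : List ℕ | l.length ≤ m ∧ ∀ a ∈ l, a ≤ m} with hSdef
  have hS : Set.Finite S := by
    have h1 : Set.Finite {l : List (Fin (m+1)) | l.length ≤ m} := List.finite_length_le _ m
    have h2 : {l : List ℕ | l.length ≤ m ∧ ∀ a ∈ l, a ≤ m} ⊆
        (fun l : List (Fin (m+1)) => l.map (Fin.val)) '' {l | l.length ≤ m} := by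
      rintro l ⟨hl, hb⟩
      refine ⟨l.pmap (fun a ha => (⟨a, ha⟩ : Fin (m+1))) (fun a ha => Nat.lt_succ_of_le (hb a ha)), ?_, ?_⟩
      · simpa using hl
      · simp [List.map_pmap]
    exact Set.Finite.subset (h1.image _) h2
  have hfin : Set.Finite {t : Set (List ℕ) | t ⊆ S} := hS.finite_subsets
  haveI := hfin.to_subtype
  have hmem : ∀ τ : {τ : PlaneTree // τ.size ≤ m}, (↑τ.1.verts : Set (List ℕ)) ∈ {t : Set (List ℕ) | t ⊆ S} := by
    intro τ l hl
    exact ⟨by have := length_lt_size τ.1 hl; omega, fun a ha => le_trans (entry_le τ.1 hl ha) τ.2⟩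
  refine Finite.of_injective (fun τ => (⟨(↑τ.1.verts : Set (List ℕ)), hmem τ⟩ :
      {t : Set (List ℕ) | t ⊆ S})) ?_
  intro τ σ h
  have := Finset.coe_injective (congrArg Subtype.val h)
  exact Subtype.ext (ext' this)

end PlaneTree
namespace PlaneTree

lemma numChildren_eq_of_forall {τ : PlaneTree} {v : List ℕ} {c : ℕ}
    (h : ∀ j, v ++ [j] ∈ τ.verts ↔ 1 ≤ j ∧ j ≤ c) : τ.numChildren v = c := by
  have h1 := (child_mem_iff τ v c).symm.trans (h c)
  have h2 := (child_mem_iff τ v (τ.numChildren v)).symm.trans (h (τ.numChildren v))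
  omega

/-- The subtree rooted at the `a`-th child of the root. -/
def sub (τ : PlaneTree) (a : ℕ) (h : [a] ∈ τ.verts) : PlaneTree where
  verts := (τ.verts.filter (fun w => w.head? = some a)).image List.tail
  root_mem := by
    rw [Finset.mem_image]
    exact ⟨[a], by rw [Finset.mem_filter]; exact ⟨h, rfl⟩, rfl⟩
  parent_mem := by
    have hmem : ∀ w, w ∈ (τ.verts.filter (fun w => w.head? = some a)).image List.tail ↔
        a :: w ∈ τ.verts := by
      intro w
      rw [Finset.mem_image]
      constructor
      · rintro ⟨u, hu, rfl⟩
        rw [Finset.mem_filter, List.head?_eq_some_iff] at hu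
        obtain ⟨hu1, ys, rfl⟩ := hu
        exact hu1
      · intro hw
        exact ⟨a :: w, by rw [Finset.mem_filter]; exact ⟨hw, rfl⟩, rfl⟩
    intro v hv
    rw [hmem] at hv ⊢
    rcases List.eq_nil_or_concat v with rfl | ⟨v', b, rfl⟩
    · simpa using hv
    · simp only [List.concat_eq_append] at hv ⊢
      have h1 : (a :: (v' ++ [b])).dropLast = a :: (v' ++ [b]).dropLast :=
        List.dropLast_cons_of_ne_nil (by simp)
      have := τ.parent_mem _ hv
      rw [h1] at this
      rwa [List.dropLast_concat] at this ⊢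
  no_zero := by
    intro v hv
    rw [Finset.mem_image] at hv
    obtain ⟨u, hu, htail⟩ := hv
    rw [Finset.mem_filter, List.head?_eq_some_iff] at hu
    obtain ⟨hu1, ys, rfl⟩ := hu
    simp only [List.tail_cons] at htail
    subst htail
    exact τ.no_zero (a :: v) (by simpa using hu1)
  sib_closed := by
    intro v i j hv h1 hij
    rw [Finset.mem_image] at hv ⊢
    obtain ⟨u, hu, htail⟩ := hv
    rw [Finset.mem_filter, List.head?_eq_some_iff] at hu
    obtain ⟨hu1, ys, rfl⟩ := hu
    simp only [List.tail_cons] at htail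
    subst htail
    refine ⟨a :: (v ++ [i]), ?_, rfl⟩
    rw [Finset.mem_filter]
    refine ⟨?_, rfl⟩
    have := τ.sib_closed (a :: v) i j (by simpa using hu1) h1 hij
    simpa using this

lemma mem_sub (τ : PlaneTree) (a : ℕ) (h : [a] ∈ τ.verts) (w : List ℕ) :
    w ∈ (τ.sub a h).verts ↔ a :: w ∈ τ.verts := by
  show w ∈ (τ.verts.filter (fun w => w.head? = some a)).image List.tail ↔ _
  rw [Finset.mem_image]
  constructor
  · rintro ⟨u, hu, rfl⟩
    rw [Finset.mem_filter, List.head?_eq_some_iff] at hu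
    obtain ⟨hu1, ys, rfl⟩ := hu
    exact hu1
  · intro hw
    exact ⟨a :: w, by rw [Finset.mem_filter]; exact ⟨hw, rfl⟩, rfl⟩

/-- Glue `c` trees below a fresh root. -/
def glue (c : ℕ) (g : Fin c → PlaneTree) : PlaneTree where
  verts := insert [] (Finset.univ.biUnion fun i : Fin c => (g i).verts.image (List.cons (i.1+1)))
  root_mem := Finset.mem_insert_self _ _
  parent_mem := by
    intro v hv
    rw [Finset.mem_insert] at hv
    rcases hv with rfl | hv
    · simpa using Finset.mem_insert_self ([] : List ℕ) _
    · rw [Finset.mem_biUnion] at hv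
      obtain ⟨i, -, hv⟩ := hv
      rw [Finset.mem_image] at hv
      obtain ⟨u, hu, rfl⟩ := hv
      rcases List.eq_nil_or_concat u with rfl | ⟨u', b, rfl⟩
      · simp
      · simp only [List.concat_eq_append] at hu ⊢
        rw [List.dropLast_cons_of_ne_nil (by simp), List.dropLast_concat]
        rw [Finset.mem_insert]
        right
        rw [Finset.mem_biUnion]
        refine ⟨i, Finset.mem_univ _, ?_⟩
        rw [Finset.mem_image]
        exact ⟨u', by have := (g i).parent_mem _ hu; rwa [List.dropLast_concat] at this, rfl⟩
  no_zero := by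
    intro v hv
    rw [Finset.mem_insert] at hv
    rcases hv with hv | hv
    · simpa using congrArg List.length hv
    · rw [Finset.mem_biUnion] at hv
      obtain ⟨i, -, hv⟩ := hv
      rw [Finset.mem_image] at hv
      obtain ⟨u, hu, heq⟩ := hv
      rcases v with _ | ⟨x, v'⟩
      · exfalso
        have : (0:ℕ) = i.1 + 1 := by
          have := congrArg (fun l => l.head?) heq
          simpa using this
        omega
      · rw [List.cons_append] at heq
        obtain ⟨hx, hu'⟩ := List.cons.injEq _ _ _ _ ▸ heq
        exact (g i).no_zero v' (hu' ▸ hu)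
  sib_closed := by
    intro v i j hv h1 hij
    rw [Finset.mem_insert] at hv ⊢
    rcases hv with hv | hv
    · simpa using congrArg List.length hv
    · right
      rw [Finset.mem_biUnion] at hv ⊢
      obtain ⟨m, -, hv⟩ := hv
      rw [Finset.mem_image] at hv
      obtain ⟨u, hu, heq⟩ := hv
      rcases v with _ | ⟨x, v'⟩
      · -- [j] = (m+1) :: u, so u = [], j = m+1
        simp only [List.nil_append] at heq
        have hu0 : u = [] := by
          have := congrArg List.length heq
          simp only [List.length_cons, List.length_nil] at this
          exact List.eq_nil_of_length_eq_zero (by omega)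
        subst hu0
        have hj : m.1 + 1 = j := by
          have := congrArg (fun l => l.head?) heq
          simpa using this
        refine ⟨⟨i - 1, by have := m.2; omega⟩, Finset.mem_univ _, ?_⟩
        rw [Finset.mem_image]
        refine ⟨[], (g _).root_mem, ?_⟩
        simp only [List.nil_append]
        congr 1
        omega
      · rw [List.cons_append] at heq
        obtain ⟨hx, hu'⟩ := List.cons.injEq _ _ _ _ ▸ heq
        refine ⟨m, Finset.mem_univ _, ?_⟩
        rw [Finset.mem_image]
        refine ⟨v' ++ [i], (g m).sib_closed v' i j (hu' ▸ hu) h1 hij, ?_⟩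
        rw [List.cons_append, hx]

lemma mem_glue (c : ℕ) (g : Fin c → PlaneTree) (w : List ℕ) :
    w ∈ (glue c g).verts ↔ w = [] ∨ ∃ i : Fin c, ∃ u ∈ (g i).verts, w = (i.1+1) :: u := by
  show w ∈ insert [] (Finset.univ.biUnion fun i : Fin c => (g i).verts.image (List.cons (i.1+1))) ↔
    w = [] ∨ ∃ i : Fin c, ∃ u ∈ (g i).verts, w = (i.1+1) :: u
  rw [Finset.mem_insert, Finset.mem_biUnion]
  apply or_congr Iff.rfl
  constructor
  · rintro ⟨i, -, hv⟩
    rw [Finset.mem_image] at hv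
    obtain ⟨u, hu, rfl⟩ := hv
    exact ⟨i, u, hu, rfl⟩
  · rintro ⟨i, u, hu, rfl⟩
    exact ⟨i, Finset.mem_univ _, Finset.mem_image.mpr ⟨u, hu, rfl⟩⟩

end PlaneTree

namespace PlaneTree

lemma numChildren_glue_nil (c : ℕ) (g : Fin c → PlaneTree) : (glue c g).numChildren [] = c := by
  apply numChildren_eq_of_forall
  intro j
  rw [List.nil_append, mem_glue]
  constructor
  · rintro (h | ⟨i, u, hu, heq⟩)
    · exact absurd (congrArg List.length h) (by simp)
    · have h1 : j = i.1 + 1 := by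
        have := congrArg (fun l => l.head?) heq
        simpa using this
      have := i.2
      omega
  · rintro ⟨h1, h2⟩
    right
    exact ⟨⟨j - 1, by omega⟩, [], (g _).root_mem, by simp; omega⟩

lemma numChildren_glue_cons (c : ℕ) (g : Fin c → PlaneTree) (i : Fin c) (w : List ℕ) :
    (glue c g).numChildren ((i.1+1) :: w) = (g i).numChildren w := by
  apply numChildren_eq_of_iff
  intro j
  rw [show ((i.1+1) :: w) ++ [j] = (i.1+1) :: (w ++ [j]) from rfl, mem_glue]
  constructor
  · rintro (h | ⟨i', u, hu, heq⟩)
    · exact absurd (congrArg List.length h) (by simp)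
    · have h1 : i'.1 = i.1 := by
        have := congrArg (fun l => l.head?) heq
        simp only [List.head?_cons, Option.some.injEq] at this
        omega
      have h2 : i' = i := Fin.ext h1
      subst h2
      have h3 : w ++ [j] = u := by
        have := congrArg List.tail heq
        simpa using this
      rwa [h3]
  · intro h
    exact Or.inr ⟨i, w ++ [j], h, rfl⟩

lemma root_not_mem_biUnion (c : ℕ) (g : Fin c → PlaneTree) :
    ([] : List ℕ) ∉ Finset.univ.biUnion fun i : Fin c => (g i).verts.image (List.cons (i.1+1)) := by
  intro h
  rw [Finset.mem_biUnion] at h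
  obtain ⟨i, -, h⟩ := h
  rw [Finset.mem_image] at h
  obtain ⟨u, -, h⟩ := h
  exact absurd (congrArg List.length h) (by simp)

lemma glue_disjoint (c : ℕ) (g : Fin c → PlaneTree) :
    (↑(Finset.univ : Finset (Fin c)) : Set (Fin c)).PairwiseDisjoint
      (fun i : Fin c => (g i).verts.image (List.cons (i.1+1))) := by
  intro i _ j _ hij
  rw [Function.onFun_apply, Finset.disjoint_left]
  intro x hx hx'
  rw [Finset.mem_image] at hx hx'
  obtain ⟨u, -, rfl⟩ := hx
  obtain ⟨u', -, h⟩ := hx'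
  apply hij
  apply Fin.ext
  have := congrArg (fun l => l.head?) h
  simp only [List.head?_cons, Option.some.injEq] at this
  omega

lemma size_glue (c : ℕ) (g : Fin c → PlaneTree) :
    (glue c g).size = 1 + ∑ i, (g i).size := by
  show (insert [] (Finset.univ.biUnion fun i : Fin c =>
    (g i).verts.image (List.cons (i.1+1)))).card = _
  rw [Finset.card_insert_of_notMem (root_not_mem_biUnion c g),
    Finset.card_biUnion]
  · rw [add_comm]
    congr 1
    apply Finset.sum_congr rfl
    intro i _
    rw [Finset.card_image_of_injective]
    · rfl
    · intro a b hab
      simpa using hab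
  · intro i _ j _ hij
    exact glue_disjoint c g (Finset.mem_coe.mpr (Finset.mem_univ i))
      (Finset.mem_coe.mpr (Finset.mem_univ j)) hij

lemma bgwWeight_glue (μ : ℕ → ℝ) (c : ℕ) (g : Fin c → PlaneTree) :
    bgwWeight μ (glue c g) = μ c * ∏ i, bgwWeight μ (g i) := by
  unfold bgwWeight
  show ∏ v ∈ insert [] (Finset.univ.biUnion fun i : Fin c =>
    (g i).verts.image (List.cons (i.1+1))), μ ((glue c g).numChildren v) = _
  rw [Finset.prod_insert (root_not_mem_biUnion c g), numChildren_glue_nil,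
    Finset.prod_biUnion (glue_disjoint c g)]
  congr 1
  apply Finset.prod_congr rfl
  intro i _
  rw [Finset.prod_image]
  · apply Finset.prod_congr rfl
    intro w _
    rw [numChildren_glue_cons]
  · intro a _ b hb hab
    simpa using hab

lemma sub_glue (c : ℕ) (g : Fin c → PlaneTree) (i : Fin c) (h : [i.1+1] ∈ (glue c g).verts) :
    (glue c g).sub (i.1+1) h = g i := by
  apply ext'
  apply Finset.ext
  intro w
  rw [mem_sub, mem_glue]
  constructor
  · rintro (h | ⟨i', u, hu, heq⟩)
    · exact absurd (congrArg List.length h) (by simp)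
    · have h1 : i' = i := by
        apply Fin.ext
        have := congrArg (fun l => l.head?) heq
        simp only [List.head?_cons, Option.some.injEq] at this
        omega
      subst h1
      have h3 : w = u := by
        have := congrArg List.tail heq
        simpa using this
      rwa [h3]
  · intro hw
    exact Or.inr ⟨i, w, hw, rfl⟩

lemma child_root_mem (τ : PlaneTree) (i : ℕ) (h1 : 1 ≤ i) (h2 : i ≤ τ.numChildren []) :
    [i] ∈ τ.verts := by
  rw [show [i] = [] ++ [i] from rfl, child_mem_iff]
  exact ⟨h1, h2⟩

/-- The subtrees of the root. -/
def subs (τ : PlaneTree) : Fin (τ.numChildren []) → PlaneTree :=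
  fun i => τ.sub (i.1+1) (child_root_mem τ _ (by omega) (by have := i.2; omega))

lemma glue_subs (τ : PlaneTree) : glue (τ.numChildren []) τ.subs = τ := by
  apply ext'
  apply Finset.ext
  intro w
  rw [mem_glue]
  constructor
  · rintro (rfl | ⟨i, u, hu, rfl⟩)
    · exact τ.root_mem
    · rw [subs, mem_sub] at hu
      exact hu
  · intro hw
    rcases w with _ | ⟨a, u⟩
    · exact Or.inl rfl
    · right
      have ha : [a] ∈ τ.verts := by
        have := take_mem τ (a :: u).length _ hw le_rfl 1
        simpa using this
      rw [show [a] = [] ++ [a] from rfl, child_mem_iff] at ha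
      refine ⟨⟨a - 1, by omega⟩, u, ?_, by simp; omega⟩
      rw [subs, mem_sub]
      have : a - 1 + 1 = a := by omega
      rwa [this]

lemma size_sub_sum (τ : PlaneTree) : τ.size = 1 + ∑ i, (τ.subs i).size := by
  conv_lhs => rw [← glue_subs τ]
  rw [size_glue]

lemma bgwWeight_sub_prod (μ : ℕ → ℝ) (τ : PlaneTree) :
    bgwWeight μ τ = μ (τ.numChildren []) * ∏ i, bgwWeight μ (τ.subs i) := by
  conv_lhs => rw [← glue_subs τ]
  rw [bgwWeight_glue]

lemma subs_glue (c : ℕ) (g : Fin c → PlaneTree) (i : Fin (((glue c g)).numChildren [])) :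
    (glue c g).subs i = g ⟨i.1, by have := i.2; have h2 := numChildren_glue_nil c g; omega⟩ := by
  rw [subs]
  exact sub_glue c g ⟨i.1, by have := i.2; have h2 := numChildren_glue_nil c g; omega⟩ _

end PlaneTree

open PlaneTree

instance finite_forest (k N : ℕ) : Finite {F : Fin k → PlaneTree // ∑ i, (F i).size = N} := by
  have key : ∀ F : {F : Fin k → PlaneTree // ∑ i, (F i).size = N}, ∀ i, (F.1 i).size ≤ N := by
    intro F i
    have h1 : (F.1 i).size ≤ ∑ j, (F.1 j).size :=
      Finset.single_le_sum (s := Finset.univ) (f := fun j => (F.1 j).size)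
        (fun j _ => Nat.zero_le _) (Finset.mem_univ i)
    have h2 := F.2
    omega
  refine Finite.of_injective
    (fun F => (fun i => (⟨F.1 i, key F i⟩ : {τ : PlaneTree // τ.size ≤ N}))) ?_
  intro F G h
  have h2 : ∀ i, (⟨F.1 i, key F i⟩ : {τ : PlaneTree // τ.size ≤ N}) = ⟨G.1 i, key G i⟩ :=
    fun i => congrFun h i
  apply Subtype.ext
  funext i
  exact congrArg Subtype.val (h2 i)

instance finite_tree_size (N : ℕ) : Finite {τ : PlaneTree // τ.size = N} := by
  refine Finite.of_injective
    (fun τ => (⟨τ.1, le_of_eq τ.2⟩ : {τ : PlaneTree // τ.size ≤ N})) ?_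
  intro x y h
  have h2 : (⟨x.1, le_of_eq x.2⟩ : {τ : PlaneTree // τ.size ≤ N}) = ⟨y.1, le_of_eq y.2⟩ := h
  exact Subtype.ext (congrArg (Subtype.val : {τ : PlaneTree // τ.size ≤ N} → PlaneTree) h2)

/-- `Ψ_k(N)`: probability that a forest of `k` trees has total size `N`. -/
noncomputable def Psi (μ : ℕ → ℝ) (k N : ℕ) : ℝ :=
  ∑' F : {F : Fin k → PlaneTree // ∑ i, (F i).size = N}, ∏ i, bgwWeight μ (F.1 i)

/-- single-tree partition function -/
noncomputable def PsiT (μ : ℕ → ℝ) (N : ℕ) : ℝ :=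
  ∑' τ : {τ : PlaneTree // τ.size = N}, bgwWeight μ τ.1

lemma Psi_one (μ : ℕ → ℝ) (N : ℕ) : Psi μ 1 N = PsiT μ N := by
  rw [Psi, PsiT]
  have h1 : ∀ F : {F : Fin 1 → PlaneTree // ∑ i, (F i).size = N},
      (∏ i, bgwWeight μ (F.1 i)) = bgwWeight μ (F.1 0) := fun F => Fin.prod_univ_one _
  rw [tsum_congr h1]
  exact (Equiv.tsum_eq
    (⟨fun τ => ⟨fun _ => τ.1, by rw [Fin.sum_univ_one]; exact τ.2⟩,
      fun F => ⟨F.1 0, by have := F.2; rwa [Fin.sum_univ_one] at this⟩,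
      fun τ => rfl,
      fun F => Subtype.ext (funext fun i => congrArg F.1 (Subsingleton.elim 0 i))⟩ :
      {τ : PlaneTree // τ.size = N} ≃ {F : Fin 1 → PlaneTree // ∑ i, (F i).size = N})
    (fun F => bgwWeight μ (F.1 0))).symm

lemma Psi_eq_zero_of_lt (μ : ℕ → ℝ) (k N : ℕ) (h : N < k) : Psi μ k N = 0 := by
  have : IsEmpty {F : Fin k → PlaneTree // ∑ i, (F i).size = N} := by
    constructor
    rintro ⟨F, hF⟩
    have h2 : k ≤ ∑ i, (F i).size := by
      calc k = ∑ _i : Fin k, 1 := by simp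
      _ ≤ ∑ i, (F i).size := Finset.sum_le_sum (fun i _ => (F i).one_le_size)
    omega
  rw [Psi, tsum_empty]

lemma Psi_zero_zero (μ : ℕ → ℝ) : Psi μ 0 0 = 1 := by
  rw [Psi, tsum_eq_single (⟨(fun i => i.elim0), by simp⟩ :
    {F : Fin 0 → PlaneTree // ∑ i, (F i).size = 0})]
  · simp
  · intro F hF
    exfalso
    apply hF
    apply Subtype.ext
    funext i
    exact i.elim0

lemma Psi_zero_pos (μ : ℕ → ℝ) (N : ℕ) (h : 1 ≤ N) : Psi μ 0 N = 0 := by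
  have : IsEmpty {F : Fin 0 → PlaneTree // ∑ i, (F i).size = N} := by
    constructor
    rintro ⟨F, hF⟩
    simp at hF
    omega
  rw [Psi, tsum_empty]

lemma Psi_conv (μ : ℕ → ℝ) (a b N : ℕ) :
    Psi μ (a + b) N = ∑ m ∈ Finset.range (N + 1), Psi μ a m * Psi μ b (N - m) := by
  classical
  haveI : Fintype {F : Fin (a+b) → PlaneTree // ∑ i, (F i).size = N} := Fintype.ofFinite _
  rw [Psi, tsum_fintype]
  set gm : {F : Fin (a+b) → PlaneTree // ∑ i, (F i).size = N} → Fin (N+1) :=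
    fun F => ⟨∑ i : Fin a, (F.1 (Fin.castAdd b i)).size, by
      have h1 : ∑ i : Fin (a+b), (F.1 i).size = N := F.2
      rw [Fin.sum_univ_add] at h1
      omega⟩ with hgm
  rw [← Fintype.sum_fiberwise gm (fun F => ∏ i, bgwWeight μ (F.1 i))]
  rw [← Fin.sum_univ_eq_sum_range (fun m => Psi μ a m * Psi μ b (N - m)) (N+1)]
  apply Fintype.sum_congr
  intro m
  haveI : Fintype {F1 : Fin a → PlaneTree // ∑ i, (F1 i).size = m.1} := Fintype.ofFinite _
  haveI : Fintype {F2 : Fin b → PlaneTree // ∑ i, (F2 i).size = N - m.1} := Fintype.ofFinite _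
  have step1 : ∑ F : {F : {F : Fin (a+b) → PlaneTree // ∑ i, (F i).size = N} // gm F = m},
        ∏ i, bgwWeight μ (F.1.1 i)
      = ∑ q : {F1 : Fin a → PlaneTree // ∑ i, (F1 i).size = m.1} ×
          {F2 : Fin b → PlaneTree // ∑ i, (F2 i).size = N - m.1},
          (∏ i, bgwWeight μ (q.1.1 i)) * (∏ i, bgwWeight μ (q.2.1 i)) := by
    apply Finset.sum_nbij' (i := fun F => ((⟨fun i => F.1.1 (Fin.castAdd b i),
        congrArg Fin.val F.2⟩ : {F1 : Fin a → PlaneTree // ∑ i, (F1 i).size = m.1}),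
        (⟨fun i => F.1.1 (Fin.natAdd a i), by
          have h1 : ∑ i : Fin (a+b), (F.1.1 i).size = N := F.1.2
          rw [Fin.sum_univ_add] at h1
          have h2 : ∑ i : Fin a, (F.1.1 (Fin.castAdd b i)).size = m.1 := congrArg Fin.val F.2
          show ∑ i : Fin b, (F.1.1 (Fin.natAdd a i)).size = N - m.1
          omega⟩ : {F2 : Fin b → PlaneTree // ∑ i, (F2 i).size = N - m.1})))
      (j := fun q => ⟨⟨Fin.append q.1.1 q.2.1, by
          rw [Fin.sum_univ_add]
          have h1 := q.1.2
          have h2 := q.2.2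
          have h3 : ∀ i, (Fin.append q.1.1 q.2.1 (Fin.castAdd b i)).size = (q.1.1 i).size :=
            fun i => congrArg size (Fin.append_left _ _ i)
          have h4 : ∀ i, (Fin.append q.1.1 q.2.1 (Fin.natAdd a i)).size = (q.2.1 i).size :=
            fun i => congrArg size (Fin.append_right _ _ i)
          rw [Finset.sum_congr rfl (fun i _ => h3 i), Finset.sum_congr rfl (fun i _ => h4 i)]
          have := m.2
          omega⟩, by
          apply Fin.ext
          show ∑ i : Fin a, (Fin.append q.1.1 q.2.1 (Fin.castAdd b i)).size = m.1
          have h3 : ∀ i, (Fin.append q.1.1 q.2.1 (Fin.castAdd b i)).size = (q.1.1 i).size :=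
            fun i => congrArg size (Fin.append_left _ _ i)
          rw [Finset.sum_congr rfl (fun i _ => h3 i)]
          exact q.1.2⟩)
    · intro F _; exact Finset.mem_univ _
    · intro q _; exact Finset.mem_univ _
    · intro F _
      apply Subtype.ext
      apply Subtype.ext
      funext i
      refine Fin.addCases ?_ ?_ i
      · intro i; exact Fin.append_left _ _ i
      · intro i; exact Fin.append_right _ _ i
    · intro q _
      apply Prod.ext
      · apply Subtype.ext
        funext i
        exact Fin.append_left _ _ i
      · apply Subtype.ext
        funext i
        exact Fin.append_right _ _ i
    · intro F _
      exact Fin.prod_univ_add (fun i => bgwWeight μ (F.1.1 i))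
  rw [step1, Fintype.sum_prod_type]
  dsimp only
  rw [← Finset.sum_mul_sum]
  rw [Psi, Psi, tsum_fintype, tsum_fintype]

lemma glue_cast (c c' : ℕ) (h : c = c') (g : Fin c → PlaneTree) :
    glue c' (fun i => g (Fin.cast h.symm i)) = glue c g := by
  subst h
  rfl

lemma PsiT_zero (μ : ℕ → ℝ) : PsiT μ 0 = 0 := by
  have : IsEmpty {τ : PlaneTree // τ.size = 0} := by
    constructor
    rintro ⟨τ, hτ⟩
    have := τ.one_le_size
    omega
  rw [PsiT, tsum_empty]

lemma Psi_single (μ : ℕ → ℝ) (N : ℕ) :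
    PsiT μ (N + 1) = ∑ j ∈ Finset.range (N + 1), μ j * Psi μ j N := by
  classical
  haveI : Fintype {τ : PlaneTree // τ.size = N + 1} := Fintype.ofFinite _
  rw [PsiT, tsum_fintype]
  set gm : {τ : PlaneTree // τ.size = N + 1} → Fin (N+1) :=
    fun τ => ⟨τ.1.numChildren [], by
      have h1 := τ.1.numChildren_le []
      have h2 := τ.2
      omega⟩ with hgm
  rw [← Fintype.sum_fiberwise gm (fun τ => bgwWeight μ τ.1)]
  rw [← Fin.sum_univ_eq_sum_range (fun j => μ j * Psi μ j N) (N+1)]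
  apply Fintype.sum_congr
  intro j
  haveI : Fintype {g : Fin j.1 → PlaneTree // ∑ i, (g i).size = N} := Fintype.ofFinite _
  have step1 : ∑ τh : {τ : {τ : PlaneTree // τ.size = N + 1} // gm τ = j},
      bgwWeight μ τh.1.1
      = ∑ g : {g : Fin j.1 → PlaneTree // ∑ i, (g i).size = N},
          μ j.1 * ∏ i, bgwWeight μ (g.1 i) := by
    apply Finset.sum_nbij'
      (i := fun τh => (⟨fun i => τh.1.1.subs
          (Fin.cast (congrArg Fin.val τh.2).symm i), by
        have hsz := τh.1.1.size_sub_sum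
        have h2 := τh.1.2
        have hre : ∑ i : Fin j.1, (τh.1.1.subs (Fin.cast (congrArg Fin.val τh.2).symm i)).size
            = ∑ i, (τh.1.1.subs i).size :=
          Fintype.sum_equiv (finCongr (congrArg Fin.val τh.2).symm)
            _ _ (fun i => by rw [finCongr_apply])
        show ∑ i : Fin j.1,
          (τh.1.1.subs (Fin.cast (congrArg Fin.val τh.2).symm i)).size = N
        omega⟩ : {g : Fin j.1 → PlaneTree // ∑ i, (g i).size = N}))
      (j := fun g => ⟨⟨glue j.1 g.1, by
          rw [size_glue, g.2]; omega⟩, by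
          apply Fin.ext
          exact numChildren_glue_nil j.1 g.1⟩)
    · intro x _; exact Finset.mem_univ _
    · intro x _; exact Finset.mem_univ _
    · intro τh _
      apply Subtype.ext
      apply Subtype.ext
      show glue j.1 (fun i => τh.1.1.subs (Fin.cast (congrArg Fin.val τh.2).symm i)) = τh.1.1
      rw [glue_cast _ _ (congrArg Fin.val τh.2) τh.1.1.subs]
      exact glue_subs τh.1.1
    · intro g _
      apply Subtype.ext
      funext i
      show (glue j.1 g.1).subs (Fin.cast _ i) = g.1 i
      rw [subs_glue]
      exact congrArg g.1 (Fin.ext rfl)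
    · intro τh _
      rw [bgwWeight_sub_prod μ τh.1.1]
      have hj : τh.1.1.numChildren [] = j.1 := congrArg Fin.val τh.2
      congr 1
      · rw [hj]
      · exact Fintype.prod_equiv (finCongr hj)
          _ _ (fun i => by rw [finCongr_apply]; rfl)
  rw [step1, ← Finset.mul_sum, Psi, tsum_fintype]

lemma Psi_rec (μ : ℕ → ℝ) (k n : ℕ) (hk : 1 ≤ k) :
    Psi μ k (n + 1) = ∑ j ∈ Finset.range (n + 1), μ j * Psi μ (j + (k - 1)) n := by
  obtain ⟨k', rfl⟩ : ∃ k', k = 1 + k' := ⟨k - 1, by omega⟩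
  have hk' : 1 + k' - 1 = k' := by omega
  rw [hk']
  rw [Psi_conv μ 1 k' (n+1)]
  have hstep : ∀ m, Psi μ 1 m = PsiT μ m := fun m => Psi_one μ m
  calc ∑ m ∈ Finset.range (n + 2), Psi μ 1 m * Psi μ k' (n + 1 - m)
      = ∑ m ∈ Finset.range (n + 1), PsiT μ (m+1) * Psi μ k' (n - m) := by
        rw [Finset.sum_range_succ' (fun m => Psi μ 1 m * Psi μ k' (n + 1 - m)) (n+1)]
        rw [hstep 0, PsiT_zero, zero_mul, add_zero]
        apply Finset.sum_congr rfl
        intro m hm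
        rw [hstep (m+1)]
        congr 2
        omega
    _ = ∑ m ∈ Finset.range (n + 1), ∑ j ∈ Finset.range (n + 1),
          μ j * Psi μ j m * Psi μ k' (n - m) := by
        apply Finset.sum_congr rfl
        intro m hm
        rw [Finset.mem_range] at hm
        rw [Psi_single μ m, Finset.sum_mul]
        apply Finset.sum_subset
        · intro x hx
          rw [Finset.mem_range] at hx ⊢
          omega
        · intro x hx hx'
          rw [Finset.mem_range] at hx hx'
          rw [Psi_eq_zero_of_lt μ x m (by omega), mul_zero, zero_mul]
    _ = ∑ j ∈ Finset.range (n + 1), μ j * Psi μ (j + k') n := by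
        rw [Finset.sum_comm]
        apply Finset.sum_congr rfl
        intro j hj
        rw [Psi_conv μ j k' n, Finset.mul_sum]
        apply Finset.sum_congr rfl
        intro m hm
        ring

/-- The walk value after `m` steps, for steps `f i - 1`. -/
def wpath (f : ℕ → ℕ) (m : ℕ) : ℤ := (∑ i ∈ Finset.range m, (f i : ℤ)) - m

/-- Extend `g : Fin n → ℕ` by zero. -/
def stepsOf {n : ℕ} (g : Fin n → ℕ) : ℕ → ℕ := fun i => if h : i < n then g ⟨i, h⟩ else 0

/-- The walk associated to `g` first hits `-k` at time `n`. -/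
def FirstHit (n k : ℕ) (g : Fin n → ℕ) : Prop :=
  wpath (stepsOf g) n = -(k : ℤ) ∧ ∀ m < n, -(k : ℤ) < wpath (stepsOf g) m

instance firstHit_decidable (n k : ℕ) (g : Fin n → ℕ) : Decidable (FirstHit n k g) :=
  show Decidable (wpath (stepsOf g) n = -(k : ℤ) ∧ ∀ m < n, -(k : ℤ) < wpath (stepsOf g) m) from
    inferInstance

lemma wpath_zero (f : ℕ → ℕ) : wpath f 0 = 0 := by simp [wpath]

lemma wpath_succ (f : ℕ → ℕ) (m : ℕ) : wpath f (m + 1) = wpath f m + f m - 1 := by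
  rw [wpath, wpath, Finset.sum_range_succ]
  push_cast
  ring

lemma sum_range_stepsOf {n : ℕ} (g : Fin n → ℕ) :
    ∑ i ∈ Finset.range n, (stepsOf g i : ℤ) = ∑ i : Fin n, (g i : ℤ) := by
  rw [← Fin.sum_univ_eq_sum_range (fun i => (stepsOf g i : ℤ)) n]
  apply Finset.sum_congr rfl
  intro i _
  rw [stepsOf, dif_pos i.2]

lemma firstHit_sum {n k : ℕ} {g : Fin n → ℕ} (h : FirstHit n k g) :
    ∑ i : Fin n, (g i : ℤ) = (n : ℤ) - k := by
  have h1 := h.1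
  rw [wpath, sum_range_stepsOf] at h1
  omega

lemma firstHit_bound {n k : ℕ} {g : Fin n → ℕ} (h : FirstHit n k g) (i : Fin n) :
    g i ≤ n := by
  have h1 := firstHit_sum h
  have h2 : (g i : ℤ) ≤ ∑ j : Fin n, (g j : ℤ) :=
    Finset.single_le_sum (f := fun j => ((g j : ℤ))) (fun j _ => Int.natCast_nonneg _)
      (Finset.mem_univ i)
  omega

instance finite_firstHit (n k : ℕ) : Finite {g : Fin n → ℕ // FirstHit n k g} := by
  refine Finite.of_injective
    (fun g => (fun i => (⟨g.1 i, Nat.lt_succ_of_le (firstHit_bound g.2 i)⟩ : Fin (n+1)))) ?_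
  intro x y h
  apply Subtype.ext
  funext i
  have h2 : (⟨x.1 i, _⟩ : Fin (n+1)) = ⟨y.1 i, _⟩ := congrFun h i
  exact congrArg Fin.val h2

/-- Probability that the walk first hits `-k` at time `n`. -/
noncomputable def hProb (μ : ℕ → ℝ) (n k : ℕ) : ℝ :=
  ∑' g : {g : Fin n → ℕ // FirstHit n k g}, ∏ i, μ (g.1 i)

lemma hProb_zero_zero (μ : ℕ → ℝ) : hProb μ 0 0 = 1 := by
  rw [hProb, tsum_eq_single (⟨(fun i => i.elim0), by
    constructor
    · simp [wpath]
    · intro m hm; omega⟩ : {g : Fin 0 → ℕ // FirstHit 0 0 g})]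
  · simp
  · intro g hg
    exfalso
    apply hg
    apply Subtype.ext
    funext i
    exact i.elim0

lemma hProb_zero_pos (μ : ℕ → ℝ) (n : ℕ) (hn : 1 ≤ n) : hProb μ n 0 = 0 := by
  have : IsEmpty {g : Fin n → ℕ // FirstHit n 0 g} := by
    constructor
    rintro ⟨g, h1, h2⟩
    have := h2 0 (by omega)
    rw [wpath_zero] at this
    omega
  rw [hProb, tsum_empty]

lemma hProb_pos_zero (μ : ℕ → ℝ) (k : ℕ) (hk : 1 ≤ k) : hProb μ 0 k = 0 := by
  have : IsEmpty {g : Fin 0 → ℕ // FirstHit 0 k g} := by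
    constructor
    rintro ⟨g, h1, h2⟩
    rw [wpath_zero] at h1
    omega
  rw [hProb, tsum_empty]

lemma hProb_eq_zero_of_lt (μ : ℕ → ℝ) (k n : ℕ) (h : n < k) : hProb μ n k = 0 := by
  have : IsEmpty {g : Fin n → ℕ // FirstHit n k g} := by
    constructor
    rintro ⟨g, hg⟩
    have h1 := firstHit_sum hg
    have h2 : (0 : ℤ) ≤ ∑ i : Fin n, (g i : ℤ) :=
      Finset.sum_nonneg (fun i _ => Int.natCast_nonneg _)
    omega
  rw [hProb, tsum_empty]

lemma stepsOf_cons {n : ℕ} (j : ℕ) (t : Fin n → ℕ) (m : ℕ) :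
    stepsOf (Fin.cons j t : Fin (n+1) → ℕ) (m + 1) = stepsOf t m := by
  rw [stepsOf, stepsOf]
  by_cases h : m < n
  · rw [dif_pos (by omega : m + 1 < n + 1), dif_pos h]
    exact @Fin.cons_succ n (fun _ => ℕ) j t ⟨m, h⟩
  · rw [dif_neg (by omega), dif_neg h]

lemma wpath_cons {n : ℕ} (j : ℕ) (t : Fin n → ℕ) (m : ℕ) :
    wpath (stepsOf (Fin.cons j t : Fin (n+1) → ℕ)) (m + 1)
      = (j : ℤ) - 1 + wpath (stepsOf t) m := by
  induction m with
  | zero =>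
    rw [wpath_succ, wpath_zero, wpath_zero]
    have : stepsOf (Fin.cons j t : Fin (n+1) → ℕ) 0 = j := by
      rw [stepsOf, dif_pos (by omega : 0 < n + 1)]
      rfl
    rw [this]
    ring
  | succ m ih =>
    rw [wpath_succ, ih, stepsOf_cons, wpath_succ]
    ring

lemma firstHit_cons_iff {n k : ℕ} (hk : 1 ≤ k) (j : ℕ) (t : Fin n → ℕ) :
    FirstHit (n+1) k (Fin.cons j t) ↔ FirstHit n (j + (k - 1)) t := by
  have hc : ((j + (k - 1) : ℕ) : ℤ) = (j : ℤ) + (k : ℤ) - 1 := by push_cast; omega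
  constructor
  · rintro ⟨h1, h2⟩
    constructor
    · rw [wpath_cons] at h1
      omega
    · intro m hm
      have := h2 (m+1) (by omega)
      rw [wpath_cons] at this
      omega
  · rintro ⟨h1, h2⟩
    constructor
    · rw [wpath_cons]
      omega
    · intro m hm
      rcases m with _ | m
      · rw [wpath_zero]
        omega
      · have := h2 m (by omega)
        rw [wpath_cons]
        omega

lemma hProb_rec (μ : ℕ → ℝ) (k n : ℕ) (hk : 1 ≤ k) :
    hProb μ (n + 1) k = ∑ j ∈ Finset.range (n + 1), μ j * hProb μ n (j + (k - 1)) := by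
  classical
  haveI : Fintype {g : Fin (n+1) → ℕ // FirstHit (n+1) k g} := Fintype.ofFinite _
  rw [hProb, tsum_fintype]
  set gm : {g : Fin (n+1) → ℕ // FirstHit (n+1) k g} → Fin (n+1) :=
    fun g => ⟨g.1 0, by
      have h1 := firstHit_sum g.2
      have h2 : (g.1 0 : ℤ) ≤ ∑ i : Fin (n+1), (g.1 i : ℤ) :=
        Finset.single_le_sum (f := fun i => ((g.1 i : ℤ))) (fun i _ => Int.natCast_nonneg _)
          (Finset.mem_univ 0)
      omega⟩ with hgm
  rw [← Fintype.sum_fiberwise gm (fun g => ∏ i, μ (g.1 i))]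
  rw [← Fin.sum_univ_eq_sum_range (fun j => μ j * hProb μ n (j + (k-1))) (n+1)]
  apply Fintype.sum_congr
  intro j
  haveI := finite_firstHit n (j.1 + (k-1))
  haveI : Fintype {t : Fin n → ℕ // FirstHit n (j.1 + (k-1)) t} := Fintype.ofFinite _
  have step1 : ∑ g : {g : {g : Fin (n+1) → ℕ // FirstHit (n+1) k g} // gm g = j},
      ∏ i, μ (g.1.1 i)
      = ∑ t : {t : Fin n → ℕ // FirstHit n (j.1 + (k-1)) t}, μ j.1 * ∏ i, μ (t.1 i) := by
    apply Finset.sum_nbij'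
      (i := fun g => (⟨Fin.tail g.1.1, by
        have h1 : FirstHit (n+1) k (Fin.cons (g.1.1 0) (Fin.tail g.1.1)) := by
          rw [Fin.cons_self_tail]; exact g.1.2
        rw [firstHit_cons_iff hk] at h1
        have h2 : g.1.1 0 = j.1 := congrArg Fin.val g.2
        rwa [h2] at h1⟩ : {t : Fin n → ℕ // FirstHit n (j.1 + (k-1)) t}))
      (j := fun t => ⟨⟨Fin.cons j.1 t.1, by
          rw [firstHit_cons_iff hk]; exact t.2⟩, by
          apply Fin.ext
          show (Fin.cons (j.1 : ℕ) t.1 : Fin (n+1) → ℕ) 0 = j.1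
          simp⟩)
    · intro x _; exact Finset.mem_univ _
    · intro x _; exact Finset.mem_univ _
    · intro g _
      apply Subtype.ext
      apply Subtype.ext
      show Fin.cons j.1 (Fin.tail g.1.1) = g.1.1
      have h2 : g.1.1 0 = j.1 := congrArg Fin.val g.2
      rw [← h2, Fin.cons_self_tail]
    · intro t _
      apply Subtype.ext
      funext i
      show Fin.tail (Fin.cons (j.1:ℕ) t.1 : Fin (n+1) → ℕ) i = t.1 i
      simp [Fin.tail_cons]
    · intro g _
      rw [Fin.prod_univ_succ (fun i => μ (g.1.1 i))]
      have h2 : g.1.1 0 = j.1 := congrArg Fin.val g.2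
      congr 1
      rw [h2]
  rw [step1, ← Finset.mul_sum, hProb, tsum_fintype]

/-- periodic extension of `g`. -/
def per {N : ℕ} (g : Fin (N+1) → ℕ) : ℕ → ℕ :=
  fun m => g ⟨m % (N+1), Nat.mod_lt _ (Nat.succ_pos N)⟩

/-- the periodic walk. -/
noncomputable def TT {N : ℕ} (g : Fin (N+1) → ℕ) : ℕ → ℤ := wpath (per g)

/-- rotation of `g` by `c`. -/
def rotg {N : ℕ} (g : Fin (N+1) → ℕ) (c : Fin (N+1)) : Fin (N+1) → ℕ :=
  fun i => g (i + c)

section Cycle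

variable {N k : ℕ} (g : Fin (N+1) → ℕ)

lemma per_fin (i : Fin (N+1)) : per g i.1 = g i := by
  rw [per]
  congr 1
  exact Fin.ext (Nat.mod_eq_of_lt i.2)

lemma per_period (m : ℕ) : per g (m + (N+1)) = per g m := by
  rw [per, per]
  congr 1
  exact Fin.ext (Nat.add_mod_right m (N+1))

lemma TT_zero : TT g 0 = 0 := wpath_zero _

lemma TT_succ (m : ℕ) : TT g (m+1) = TT g m + per g m - 1 := wpath_succ _ m

lemma TT_first_period (hg : ∑ i, (g i : ℤ) = (N+1 : ℤ) - k) : TT g (N+1) = -(k:ℤ) := by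
  rw [TT, wpath]
  have h1 : ∑ i ∈ Finset.range (N+1), (per g i : ℤ) = ∑ i : Fin (N+1), (g i : ℤ) := by
    rw [← Fin.sum_univ_eq_sum_range (fun i => (per g i : ℤ)) (N+1)]
    apply Finset.sum_congr rfl
    intro i _
    rw [per_fin]
  rw [h1, hg]
  push_cast
  ring

lemma TT_period (hg : ∑ i, (g i : ℤ) = (N+1 : ℤ) - k) (m : ℕ) :
    TT g (m + (N+1)) = TT g m - k := by
  induction m with
  | zero => rw [Nat.zero_add, TT_first_period g hg, TT_zero]; ring
  | succ m ih =>
    have h1 : m + 1 + (N+1) = (m + (N+1)) + 1 := by omega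
    rw [h1, TT_succ, ih, per_period, TT_succ]
    ring

lemma TT_skip_free (m : ℕ) : ∀ v : ℤ, v ≤ 0 → TT g m ≤ v → ∃ m' ≤ m, TT g m' = v := by
  induction m with
  | zero =>
    intro v hv h
    rw [TT_zero] at h
    exact ⟨0, le_rfl, by rw [TT_zero]; omega⟩
  | succ m ih =>
    intro v hv h
    by_cases he : TT g (m+1) = v
    · exact ⟨m+1, le_rfl, he⟩
    · have h2 : TT g m ≤ v := by
        have := TT_succ g m
        have hper : (0:ℤ) ≤ per g m := Int.natCast_nonneg _
        omega
      obtain ⟨m', hm', hv'⟩ := ih v hv h2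
      exact ⟨m', by omega, hv'⟩

lemma TT_hits (hk : 1 ≤ k) (hg : ∑ i, (g i : ℤ) = (N+1 : ℤ) - k) (j : ℕ) :
    ∃ m, TT g m = -(j : ℤ) := by
  have h1 : ∀ l : ℕ, TT g (l * (N+1)) = -((l*k : ℕ) : ℤ) := by
    intro l
    induction l with
    | zero => simpa using TT_zero g
    | succ l ih =>
      have : (l+1) * (N+1) = l * (N+1) + (N+1) := by ring
      rw [this, TT_period g hg, ih]
      push_cast
      ring
  have h2 : TT g (j * (N+1)) ≤ -(j:ℤ) := by
    rw [h1 j]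
    have : j ≤ j * k := Nat.le_mul_of_pos_right j (by omega)
    push_cast
    omega
  obtain ⟨m, _, hm⟩ := TT_skip_free g (j * (N+1)) (-(j:ℤ)) (by omega) h2
  exact ⟨m, hm⟩

open Classical in
/-- first hitting time of `-j` by the periodic walk. -/
noncomputable def ft (hk : 1 ≤ k) (hg : ∑ i, (g i : ℤ) = (N+1 : ℤ) - k) (j : ℕ) : ℕ :=
  Nat.find (TT_hits g hk hg j)

section FT
variable (hk : 1 ≤ k) (hg : ∑ i, (g i : ℤ) = (N+1 : ℤ) - k)

lemma ft_spec (j : ℕ) : TT g (ft g hk hg j) = -(j:ℤ) := by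
  classical
  exact Nat.find_spec (TT_hits g hk hg j)

lemma ft_min' (j : ℕ) {m : ℕ} (h : TT g m = -(j:ℤ)) : ft g hk hg j ≤ m := by
  classical
  exact Nat.find_min' (TT_hits g hk hg j) h

lemma ft_gt (j : ℕ) {m : ℕ} (h : m < ft g hk hg j) : -(j:ℤ) < TT g m := by
  by_contra hc
  push_neg at hc
  obtain ⟨m', hm', hv⟩ := TT_skip_free g m (-(j:ℤ)) (by omega) hc
  have := ft_min' g hk hg j hv
  omega

/-- the walk condition for `FirstHit` of a rotation. -/
lemma stepsOf_rotg (c : Fin (N+1)) (m : ℕ) (hm : m < N+1) :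
    stepsOf (rotg g c) m = per g (c.1 + m) := by
  rw [stepsOf, dif_pos hm, rotg, per]
  congr 1
  apply Fin.ext
  show ((⟨m, hm⟩ : Fin (N+1)) + c).1 = (c.1 + m) % (N+1)
  show (m + c.1) % (N+1) = (c.1 + m) % (N+1)
  rw [Nat.add_comm]

lemma wpath_rotg (c : Fin (N+1)) (m : ℕ) (hm : m ≤ N+1) :
    wpath (stepsOf (rotg g c)) m = TT g (c.1 + m) - TT g c.1 := by
  induction m with
  | zero => rw [wpath_zero, Nat.add_zero]; ring
  | succ m ih =>
    have hm' : m < N + 1 := by omega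
    rw [wpath_succ, ih (by omega), stepsOf_rotg g c m hm', ← Nat.add_assoc, TT_succ]
    ring

lemma firstHit_rotg_iff (hg : ∑ i, (g i : ℤ) = (N+1 : ℤ) - k) (c : Fin (N+1)) :
    FirstHit (N+1) k (rotg g c) ↔ ∀ m' < c.1 + (N+1), TT g c.1 - k < TT g m' := by
  rw [FirstHit]
  have hfin : wpath (stepsOf (rotg g c)) (N+1) = -(k:ℤ) := by
    rw [wpath_rotg g c (N+1) le_rfl, TT_period g hg]
    ring
  constructor
  · rintro ⟨-, h2⟩
    intro m' hm'
    by_cases hc : c.1 ≤ m'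
    · have := h2 (m' - c.1) (by omega)
      rw [wpath_rotg g c (m' - c.1) (by omega)] at this
      have he : c.1 + (m' - c.1) = m' := by omega
      rw [he] at this
      omega
    · push_neg at hc
      have h3 := h2 (m' + (N+1) - c.1) (by omega)
      rw [wpath_rotg g c (m' + (N+1) - c.1) (by omega)] at h3
      have he : c.1 + (m' + (N+1) - c.1) = m' + (N+1) := by omega
      rw [he, TT_period g hg] at h3
      omega
  · intro h
    refine ⟨hfin, ?_⟩
    intro m hm
    rw [wpath_rotg g c m (by omega)]
    have := h (c.1 + m) (by omega)
    omega

lemma cycle_count (hk : 1 ≤ k) (hg : ∑ i, (g i : ℤ) = (N+1 : ℤ) - k) :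
    (Finset.univ.filter (fun c : Fin (N+1) => FirstHit (N+1) k (rotg g c))).card = k := by
  obtain ⟨m₀, hm₀mem, hm₀⟩ := Finset.exists_min_image (Finset.range (N+1)) (TT g)
    ⟨0, by simp⟩
  rw [Finset.mem_range] at hm₀mem
  have hmin : ∀ m < N+1, TT g m₀ ≤ TT g m := by
    intro m hm
    exact hm₀ m (Finset.mem_range.mpr hm)
  have h00 : TT g m₀ ≤ 0 := by
    have := hmin 0 (by omega)
    rwa [TT_zero] at this
  set M : ℕ := (-(TT g m₀)).toNat with hMdef
  have hM : (M : ℤ) = -(TT g m₀) := Int.toNat_of_nonneg (by omega)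
  have good_iff : ∀ c : Fin (N+1),
      (c ∈ Finset.univ.filter (fun c : Fin (N+1) => FirstHit (N+1) k (rotg g c))) ↔
      ∀ m' < c.1 + (N+1), TT g c.1 - k < TT g m' := by
    intro c
    rw [Finset.mem_filter]
    constructor
    · rintro ⟨-, h⟩
      exact (firstHit_rotg_iff g hg c).mp h
    · intro h
      exact ⟨Finset.mem_univ _, (firstHit_rotg_iff g hg c).mpr h⟩
  have hftub : ∀ b : ℕ, (b:ℤ) ≤ (M:ℤ) + k → ft g hk hg b ≤ m₀ + (N+1) := by
    intro b hble
    have h1 : TT g (m₀ + (N+1)) = TT g m₀ - k := TT_period g hg m₀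
    have h3 : TT g (m₀ + (N+1)) ≤ -(b:ℤ) := by omega
    obtain ⟨m', hm', hv⟩ := TT_skip_free g (m₀ + (N+1)) (-(b:ℤ)) (by omega) h3
    exact le_trans (ft_min' g hk hg b hv) hm'
  have key : (Finset.univ.filter (fun c : Fin (N+1) => FirstHit (N+1) k (rotg g c))).card
      = (Finset.Ioc M (M+k)).card := by
    refine Finset.card_bij' (i := fun c _ => ((k:ℤ) - TT g c.1).toNat)
      (j := fun b hb => (⟨ft g hk hg b - (N+1), by
        rw [Finset.mem_Ioc] at hb
        have hble : (b:ℤ) ≤ (M:ℤ) + k := by exact_mod_cast hb.2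
        have := hftub b hble
        omega⟩ : Fin (N+1))) ?hi ?hj ?hleft ?hright
    case hi => -- i maps into Ioc
      intro c hc
      beta_reduce
      have hc := (good_iff c).mp hc
      have hneg : TT g c.1 - k < 0 := by
        have := hc 0 (by omega)
        rw [TT_zero] at this
        omega
      have h1 : TT g c.1 - k < TT g m₀ := hc m₀ (by omega)
      have h2 : TT g m₀ ≤ TT g c.1 := hmin c.1 c.2
      rw [Finset.mem_Ioc]
      omega
    case hj => -- j maps into the filter
      intro b hb
      beta_reduce
      have hb' := Finset.mem_Ioc.mp hb
      have hbM : (M:ℤ) < (b:ℤ) := by exact_mod_cast hb'.1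
      have hbMk : (b:ℤ) ≤ (M:ℤ) + k := by exact_mod_cast hb'.2
      have hft : TT g (ft g hk hg b) = -(b:ℤ) := ft_spec g hk hg b
      have hbn : N+1 ≤ ft g hk hg b := by
        by_contra hcon
        push_neg at hcon
        have := hmin (ft g hk hg b) hcon
        omega
      refine (good_iff _).mpr ?_
      intro m' hm'
      have hcval : (ft g hk hg b - (N+1)) + (N+1) = ft g hk hg b := by omega
      have hm'' : m' < (ft g hk hg b - (N+1)) + (N+1) := hm'
      have hm'2 : m' < ft g hk hg b := by omega
      have h4 : TT g (ft g hk hg b - (N+1)) - k = -(b:ℤ) := by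
        have h5 := TT_period g hg (ft g hk hg b - (N+1))
        rw [hcval, hft] at h5
        omega
      have h6 := ft_gt g hk hg b hm'2
      show TT g ((ft g hk hg b - (N+1) : ℕ)) - (k:ℤ) < TT g m'
      omega
    case hleft => -- left inverse
      intro c hc
      beta_reduce
      have hc := (good_iff c).mp hc
      have hneg : TT g c.1 - k < 0 := by
        have := hc 0 (by omega)
        rw [TT_zero] at this
        omega
      have hbz : (((k:ℤ) - TT g c.1).toNat : ℤ) = (k:ℤ) - TT g c.1 :=
        Int.toNat_of_nonneg (by omega)
      have hp : TT g (c.1 + (N+1)) = -((((k:ℤ) - TT g c.1).toNat : ℕ) : ℤ) := by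
        rw [TT_period g hg c.1]
        omega
      have hle : ft g hk hg ((k:ℤ) - TT g c.1).toNat ≤ c.1 + (N+1) :=
        ft_min' g hk hg _ hp
      have hge : c.1 + (N+1) ≤ ft g hk hg ((k:ℤ) - TT g c.1).toNat := by
        by_contra hcon
        push_neg at hcon
        have h6 := hc (ft g hk hg ((k:ℤ) - TT g c.1).toNat) hcon
        have h7 := ft_spec g hk hg ((k:ℤ) - TT g c.1).toNat
        omega
      apply Fin.ext
      show ft g hk hg ((k:ℤ) - TT g c.1).toNat - (N+1) = c.1
      omega
    case hright => -- right inverse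
      intro b hb
      beta_reduce
      have hb' := Finset.mem_Ioc.mp hb
      have hbM : (M:ℤ) < (b:ℤ) := by exact_mod_cast hb'.1
      have hbMk : (b:ℤ) ≤ (M:ℤ) + k := by exact_mod_cast hb'.2
      have hft : TT g (ft g hk hg b) = -(b:ℤ) := ft_spec g hk hg b
      have hbn : N+1 ≤ ft g hk hg b := by
        by_contra hcon
        push_neg at hcon
        have := hmin (ft g hk hg b) hcon
        omega
      have h5 := TT_period g hg (ft g hk hg b - (N+1))
      have hcval : (ft g hk hg b - (N+1)) + (N+1) = ft g hk hg b := by omega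
      rw [hcval, hft] at h5
      have h8 : ((k:ℤ) - TT g (ft g hk hg b - (N+1))).toNat = b := by omega
      show ((k:ℤ) - TT g (ft g hk hg b - (N+1) : ℕ)).toNat = b
      exact h8
  rw [key, Nat.card_Ioc]
  omega

end FT

end Cycle

section Assembly

variable (μ : ℕ → ℝ)

instance finite_walk (n : ℕ) (k : ℤ) :
    Finite {f : Fin n → ℕ // (∑ i, (f i : ℤ)) = (n : ℤ) - k} := by
  have key : ∀ f : {f : Fin n → ℕ // (∑ i, (f i : ℤ)) = (n : ℤ) - k}, ∀ i,
      f.1 i ≤ ((n : ℤ) - k).toNat := by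
    intro f i
    have h1 : (f.1 i : ℤ) ≤ ∑ j, (f.1 j : ℤ) :=
      Finset.single_le_sum (f := fun j => ((f.1 j : ℤ))) (fun j _ => Int.natCast_nonneg _)
        (Finset.mem_univ i)
    have h2 := f.2
    omega
  refine Finite.of_injective
    (fun f => (fun i => (⟨f.1 i, Nat.lt_succ_of_le (key f i)⟩
      : Fin (((n : ℤ) - k).toNat + 1)))) ?_
  intro x y h
  apply Subtype.ext
  funext i
  have h2 : (⟨x.1 i, _⟩ : Fin _) = ⟨y.1 i, _⟩ := congrFun h i
  exact congrArg Fin.val h2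

variable {N k : ℕ}

lemma hProb_eq (hk : 1 ≤ k) :
    hProb μ (N+1) k = ∑ g ∈ Fintype.piFinset (fun _ : Fin (N+1) => Finset.range (N+2)),
      if FirstHit (N+1) k g then ∏ i, μ (g i) else 0 := by
  classical
  haveI : Fintype {g : Fin (N+1) → ℕ // FirstHit (N+1) k g} := Fintype.ofFinite _
  rw [hProb, tsum_fintype, ← Finset.sum_filter]
  symm
  apply Finset.sum_subtype
  intro g
  rw [Finset.mem_filter, Fintype.mem_piFinset]
  constructor
  · rintro ⟨-, h⟩; exact h
  · intro h
    refine ⟨fun i => Finset.mem_range.mpr ?_, h⟩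
    have := firstHit_bound h i
    omega

lemma walkProb_eq :
    walkProb μ (N+1) (k : ℤ) =
      ∑ g ∈ Fintype.piFinset (fun _ : Fin (N+1) => Finset.range (N+2)),
      if (∑ i, (g i : ℤ)) = ((N+1 : ℕ) : ℤ) - (k : ℤ) then ∏ i, μ (g i) else 0 := by
  classical
  haveI : Fintype {f : Fin (N+1) → ℕ // (∑ i, (f i : ℤ)) = ((N+1 : ℕ) : ℤ) - (k:ℤ)} :=
    Fintype.ofFinite _
  rw [walkProb, tsum_fintype, ← Finset.sum_filter]
  symm
  apply Finset.sum_subtype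
  intro g
  rw [Finset.mem_filter, Fintype.mem_piFinset]
  constructor
  · rintro ⟨-, h⟩; exact h
  · intro h
    refine ⟨fun i => Finset.mem_range.mpr ?_, h⟩
    have h1 : (g i : ℤ) ≤ ∑ j, (g j : ℤ) :=
      Finset.single_le_sum (f := fun j => ((g j : ℤ))) (fun j _ => Int.natCast_nonneg _)
        (Finset.mem_univ i)
    omega

lemma sum_rotg (g : Fin (N+1) → ℕ) (c : Fin (N+1)) :
    ∑ i, ((rotg g c) i : ℤ) = ∑ i, (g i : ℤ) :=
  Fintype.sum_equiv (Equiv.addRight c) _ (fun i => (g i : ℤ)) (fun i => rfl)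

lemma prod_rotg (g : Fin (N+1) → ℕ) (c : Fin (N+1)) :
    ∏ i, μ ((rotg g c) i) = ∏ i, μ (g i) :=
  Fintype.prod_equiv (Equiv.addRight c) _ (fun i => μ (g i)) (fun i => rfl)

lemma rotg_rotg (g : Fin (N+1) → ℕ) (c c' : Fin (N+1)) (i : Fin (N+1)) :
    rotg (rotg g c) c' i = g (i + c' + c) := rfl

lemma cycle_eq (hk : 1 ≤ k) :
    (((N+1 : ℕ)) : ℝ) * hProb μ (N+1) k = (k : ℝ) * walkProb μ (N+1) (k : ℤ) := by
  classical
  rw [hProb_eq μ hk, walkProb_eq μ]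
  set A := Fintype.piFinset (fun _ : Fin (N+1) => Finset.range (N+2)) with hA
  have hrotA : ∀ (g : Fin (N+1) → ℕ) (c : Fin (N+1)), g ∈ A → rotg g c ∈ A := by
    intro g c hg
    rw [hA, Fintype.mem_piFinset] at hg ⊢
    intro i
    exact hg _
  have swap : ∀ c : Fin (N+1),
      (∑ g ∈ A, if FirstHit (N+1) k g then ∏ i, μ (g i) else 0)
      = ∑ g ∈ A, if FirstHit (N+1) k (rotg g c) then ∏ i, μ (g i) else 0 := by
    intro c
    apply Finset.sum_nbij' (i := fun g => rotg g (-c)) (j := fun g => rotg g c)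
    · intro g hg; exact hrotA g _ hg
    · intro g hg; exact hrotA g _ hg
    · intro g _
      funext i
      rw [rotg_rotg]
      congr 1
      exact add_neg_cancel_right i c
    · intro g _
      funext i
      rw [rotg_rotg]
      congr 1
      exact neg_add_cancel_right i c
    · intro g _
      have h1 : FirstHit (N+1) k g ↔ FirstHit (N+1) k (rotg (rotg g (-c)) c) := by
        have : rotg (rotg g (-c)) c = g := by
          funext i
          rw [rotg_rotg]
          congr 1
          exact add_neg_cancel_right i c
        rw [this]
      have h2 : ∏ i, μ ((rotg g (-c)) i) = ∏ i, μ (g i) := prod_rotg μ g (-c)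
      rw [← h2]
      by_cases hF : FirstHit (N+1) k g
      · rw [if_pos hF, if_pos (by rwa [← h1])]
      · rw [if_neg hF, if_neg (by rwa [← h1] )]
  have inner : ∀ g ∈ A, (∑ c : Fin (N+1), if FirstHit (N+1) k (rotg g c)
        then ∏ i, μ (g i) else 0)
      = if (∑ i, (g i : ℤ)) = ((N+1 : ℕ) : ℤ) - (k:ℤ) then (k:ℝ) * ∏ i, μ (g i) else 0 := by
    intro g hg
    rw [← Finset.sum_filter, Finset.sum_const]
    by_cases hs : (∑ i, (g i : ℤ)) = ((N+1 : ℕ) : ℤ) - (k:ℤ)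
    · rw [if_pos hs]
      have hs' : ∑ i, (g i : ℤ) = ((N : ℤ)+1) - (k:ℤ) := by push_cast at hs ⊢; omega
      rw [cycle_count g hk hs', nsmul_eq_mul]
    · rw [if_neg hs]
      have hempty : (Finset.univ.filter (fun c : Fin (N+1) => FirstHit (N+1) k (rotg g c)))
          = ∅ := by
        apply Finset.filter_eq_empty_iff.mpr
        intro c _ hF
        apply hs
        have h1 := firstHit_sum hF
        rw [sum_rotg g c] at h1
        push_cast at h1 ⊢
        omega
      rw [hempty, Finset.card_empty, zero_smul]
  calc (((N+1 : ℕ)) : ℝ) * ∑ g ∈ A, (if FirstHit (N+1) k g then ∏ i, μ (g i) else 0)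
      = ∑ _c : Fin (N+1), ∑ g ∈ A, (if FirstHit (N+1) k g then ∏ i, μ (g i) else 0) := by
        rw [Finset.sum_const, Finset.card_univ, Fintype.card_fin, nsmul_eq_mul]
    _ = ∑ c : Fin (N+1), ∑ g ∈ A, (if FirstHit (N+1) k (rotg g c) then ∏ i, μ (g i) else 0) := by
        apply Finset.sum_congr rfl
        intro c _
        exact swap c
    _ = ∑ g ∈ A, ∑ c : Fin (N+1), (if FirstHit (N+1) k (rotg g c) then ∏ i, μ (g i) else 0) :=
        Finset.sum_comm
    _ = ∑ g ∈ A, (if (∑ i, (g i : ℤ)) = ((N+1 : ℕ) : ℤ) - (k:ℤ)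
        then (k:ℝ) * ∏ i, μ (g i) else 0) := Finset.sum_congr rfl inner
    _ = (k : ℝ) * ∑ g ∈ A, (if (∑ i, (g i : ℤ)) = ((N+1 : ℕ) : ℤ) - (k:ℤ)
        then ∏ i, μ (g i) else 0) := by
        rw [Finset.mul_sum]
        apply Finset.sum_congr rfl
        intro g _
        rw [mul_ite, mul_zero]

lemma Psi_eq_hProb : ∀ n k, Psi μ k n = hProb μ n k := by
  intro n
  induction n with
  | zero =>
    intro k
    rcases k with _ | k'
    · rw [Psi_zero_zero, hProb_zero_zero]
    · rw [Psi_eq_zero_of_lt μ _ _ (by omega), hProb_eq_zero_of_lt μ _ _ (by omega)]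
  | succ n ih =>
    intro k
    rcases k with _ | k'
    · rw [Psi_zero_pos μ _ (by omega), hProb_zero_pos μ _ (by omega)]
    · rw [Psi_rec μ (k'+1) n (by omega), hProb_rec μ (k'+1) n (by omega)]
      apply Finset.sum_congr rfl
      intro j _
      rw [ih (j + (k' + 1 - 1))]

end Assembly


open PlaneTree in
/-- Kemperman's formula for forests: the probability `Ψ_k(n)` that `k` independent
`BGW_μ` trees have total size `n` equals `(k/n) P(Wₙ = -k)`. -/
theorem stmt_5 (μ : ℕ → ℝ) (hpos : ∀ j, 0 ≤ μ j)
    (hsum : ∑' j, μ j = 1)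
    (hmean_summable : Summable (fun j : ℕ => (j : ℝ) * μ j))
    (hmean : ∑' j : ℕ, (j : ℝ) * μ j ≤ 1)
    (k n : ℕ) (hk : 1 ≤ k) (hn : 1 ≤ n) :
    (∑' F : {F : Fin k → PlaneTree // ∑ i, (F i).size = n}, ∏ i, bgwWeight μ (F.1 i)) =
      ((k : ℝ) / n) * walkProb μ n k := by
  obtain ⟨N, rfl⟩ : ∃ N, n = N + 1 := ⟨n - 1, by omega⟩
  have h1 : (∑' F : {F : Fin k → PlaneTree // ∑ i, (F i).size = N + 1},
      ∏ i, bgwWeight μ (F.1 i)) = Psi μ k (N+1) := rfl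
  rw [h1, Psi_eq_hProb μ (N+1) k]
  have h2 := cycle_eq μ (N := N) (k := k) hk
  have h3 : (((N+1 : ℕ)) : ℝ) ≠ 0 := by positivity
  field_simp
  rw [mul_comm (hProb μ (N+1) k) _]
  convert h2 using 2
end

section
/- Let μ be a probability measure on ℤ≥0 with mean 1 and P(X ≥ k) = L(k)/k² with L slowly varying (domain of attraction of a Gaussian law, infinite variance case), and let (L₁,R₁) be as above with law P((L,R)=(i,j)) = μ(i+j+1). Then P(R₁ ≥ k) ∼ L(k)/k and P(min(L₁,R₁) ≥ k) ∼ L(k)/(2k) as k → ∞. -/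
open Filter Topology

/-- A function `L : ℝ → ℝ` is slowly varying at infinity. -/
def SlowlyVarying (L : ℝ → ℝ) : Prop :=
  ∀ l : ℝ, 0 < l → Tendsto (fun x => L (l * x) / L x) atTop (nhds 1)

/-- The tail `μ([j, ∞)) = Σ_{m ≥ j} μ(m)`. -/
noncomputable def tailSum (μ : ℕ → ℝ) (j : ℕ) : ℝ := ∑' i : ℕ, μ (j + i)

section KaramataAux
open Finset
lemma aux_tendsto_one (u : ℕ → ℝ)
    (h : ∀ ε : ℝ, 0 < ε → ε ≤ 1/2 → ∀ᶠ k in atTop, |u k - 1| ≤ ε) :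
    Tendsto u atTop (nhds 1) := by
  rw [Metric.tendsto_atTop]
  intro ε hε
  have hmin : 0 < min (ε/2) (1/2) := by positivity
  obtain ⟨N, hN⟩ := eventually_atTop.mp (h (min (ε/2) (1/2)) hmin (min_le_right _ _))
  exact ⟨N, fun n hn => by
    have := hN n hn
    rw [Real.dist_eq]
    calc |u n - 1| ≤ min (ε/2) (1/2) := this
      _ ≤ ε/2 := min_le_left _ _
      _ < ε := by linarith⟩

noncomputable def Sk (f : ℕ → ℝ) (k : ℕ) : ℝ := ∑' m, f (k+1+m)

lemma Sk_summable (f : ℕ → ℝ) (hsum : Summable fun m => f (m+1)) (k : ℕ) :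
    Summable fun m => f (k+1+m) := by
  have := (summable_nat_add_iff (f := fun m => f (m+1)) k).2 hsum
  exact this.congr (fun m => by congr 1; omega)

lemma Sk_step (f : ℕ → ℝ) (hsum : Summable fun m => f (m+1)) (k : ℕ) :
    Sk f k = f (k+1) + Sk f (k+1) := by
  unfold Sk
  rw [Summable.tsum_eq_zero_add (Sk_summable f hsum k)]
  simp only [Nat.add_zero]
  congr 1
  exact tsum_congr fun m => by congr 1; omega

lemma Sk_split (f : ℕ → ℝ) (hsum : Summable fun m => f (m+1)) {a b : ℕ} (hab : a ≤ b) :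
    Sk f a = (∑ j ∈ Finset.Ioc a b, f j) + Sk f b := by
  induction b, hab using Nat.le_induction with
  | base => simp
  | succ b hb ih =>
      rw [ih, Sk_step f hsum b, Finset.sum_Ioc_succ_top (by omega)]
      ring

lemma Sk_nonneg (f : ℕ → ℝ) (hpos : ∀ k, 0 < f k) (k : ℕ) : 0 ≤ Sk f k :=
  tsum_nonneg fun m => (hpos _).le

lemma Sk_pos (f : ℕ → ℝ) (hpos : ∀ k, 0 < f k) (hsum : Summable fun m => f (m+1)) (k : ℕ) :
    0 < Sk f k := by
  have h0 : f (k+1+0) ≤ Sk f k := Summable.le_tsum (Sk_summable f hsum k) 0 (fun j _ => (hpos _).le)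
  have := hpos (k+1+0)
  linarith

lemma Sk_tendsto_zero (f : ℕ → ℝ) (hsum : Summable fun m => f (m+1)) :
    Tendsto (Sk f) atTop (nhds 0) := by
  have h := tendsto_sum_nat_add (fun m => f (m+1))
  refine h.congr fun k => tsum_congr fun m => by congr 1; omega

lemma sum_Ioc_le (f : ℕ → ℝ) (hmono : Antitone f) {a b : ℕ} (hab : a ≤ b) :
    ∑ j ∈ Finset.Ioc a b, f j ≤ ((b - a : ℕ) : ℝ) * f a := by
  have h := Finset.sum_le_card_nsmul (Finset.Ioc a b) f (f a)
    (fun x hx => hmono (Finset.mem_Ioc.mp hx).1.le)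
  rwa [Nat.card_Ioc, nsmul_eq_mul] at h

lemma sum_Ioc_ge (f : ℕ → ℝ) (hmono : Antitone f) {a b : ℕ} (hab : a ≤ b) :
    ((b - a : ℕ) : ℝ) * f b ≤ ∑ j ∈ Finset.Ioc a b, f j := by
  have h := Finset.card_nsmul_le_sum (Finset.Ioc a b) f (f b)
    (fun x hx => hmono (Finset.mem_Ioc.mp hx).2)
  rwa [Nat.card_Ioc, nsmul_eq_mul] at h
lemma unif (f : ℕ → ℝ) (hpos : ∀ k, 0 < f k)
    (hq : ∀ q : ℕ, 1 ≤ q → Tendsto (fun k => (q:ℝ)^2 * f (q*k) / f k) atTop (nhds 1))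
    (q : ℕ) (hq1 : 1 ≤ q) {δ : ℝ} (hδ : 0 < δ) :
    ∀ᶠ m in atTop, (1-δ) * f m ≤ (q:ℝ)^2 * f (q*m) ∧ (q:ℝ)^2 * f (q*m) ≤ (1+δ) * f m := by
  have h := Metric.tendsto_nhds.mp (hq q hq1) δ hδ
  filter_upwards [h] with m hm
  rw [Real.dist_eq, abs_lt] at hm
  have hfm := hpos m
  constructor
  · have : (1-δ) < (q:ℝ)^2 * f (q*m) / f m := by linarith [hm.1]
    calc (1-δ) * f m ≤ ((q:ℝ)^2 * f (q*m) / f m) * f m := by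
          apply mul_le_mul_of_nonneg_right this.le hfm.le
      _ = (q:ℝ)^2 * f (q*m) := by field_simp
  · have : (q:ℝ)^2 * f (q*m) / f m < 1+δ := by linarith [hm.2]
    calc (q:ℝ)^2 * f (q*m) = ((q:ℝ)^2 * f (q*m) / f m) * f m := by field_simp
      _ ≤ (1+δ) * f m := mul_le_mul_of_nonneg_right this.le hfm.le

lemma Sk_crude (f : ℕ → ℝ) (hpos : ∀ k, 0 < f k) (hdec : Antitone f)
    (hsum : Summable fun m => f (m+1))
    (M : ℕ) (hM : ∀ m, M ≤ m → f (2*m) ≤ 5/16 * f m) :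
    ∀ k, M ≤ k → 1 ≤ k → Sk f k ≤ 3 * ((k:ℝ) * f k) := by
  intro k hk hk1
  -- f (2^i * k) ≤ (5/16)^i * f k
  have hpow : ∀ i : ℕ, f (2^i * k) ≤ (5/16)^i * f k := by
    intro i
    induction i with
    | zero => simp
    | succ i ih =>
        have h1 : f (2^(i+1) * k) = f (2 * (2^i * k)) := by ring_nf
        have h2 : f (2 * (2^i * k)) ≤ 5/16 * f (2^i * k) :=
          hM _ (le_trans hk (Nat.le_mul_of_pos_left k (Nat.pow_pos (n := i) (by norm_num)) |>.trans_eq rfl) |>.trans (le_refl _))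
        calc f (2^(i+1) * k) = f (2 * (2^i * k)) := h1
          _ ≤ 5/16 * f (2^i * k) := h2
          _ ≤ 5/16 * ((5/16)^i * f k) := by
              have := hpos (2^i * k); nlinarith [ih]
          _ = (5/16)^(i+1) * f k := by ring
  -- Sk f k ≤ (∑ i ∈ range I, (5/8)^i) * (k * f k) + Sk f (2^I * k)
  have hstep : ∀ I : ℕ, Sk f k ≤ (∑ i ∈ range I, (5/8:ℝ)^i) * ((k:ℝ) * f k) + Sk f (2^I * k) := by
    intro I
    induction I with
    | zero => simp
    | succ I ih =>
        have hle : 2^I * k ≤ 2^(I+1) * k := by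
          have : (2:ℕ)^I ≤ 2^(I+1) := Nat.pow_le_pow_right (by norm_num) (by omega)
          exact Nat.mul_le_mul_right k this
        have hsplit := Sk_split f hsum hle
        have hblock : ∑ j ∈ Finset.Ioc (2^I * k) (2^(I+1) * k), f j
            ≤ ((2^(I+1) * k - 2^I * k : ℕ) : ℝ) * f (2^I * k) := sum_Ioc_le f hdec hle
        have hcard : ((2^(I+1) * k - 2^I * k : ℕ) : ℝ) = 2^I * k := by
          have : 2^(I+1) * k - 2^I * k = 2^I * k := by ring_nf; omega
          rw [this]; push_cast; ring
        have hb2 : ∑ j ∈ Finset.Ioc (2^I * k) (2^(I+1) * k), f j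
            ≤ (2:ℝ)^I * k * ((5/16)^I * f k) := by
          rw [hcard] at hblock
          calc ∑ j ∈ Finset.Ioc (2^I * k) (2^(I+1) * k), f j ≤ (2:ℝ)^I * k * f (2^I * k) := hblock
            _ ≤ (2:ℝ)^I * k * ((5/16)^I * f k) := by
                apply mul_le_mul_of_nonneg_left (hpow I)
                positivity
        have : Sk f (2^I * k) ≤ (5/8:ℝ)^I * ((k:ℝ) * f k) + Sk f (2^(I+1) * k) := by
          rw [hsplit]
          have : (2:ℝ)^I * k * ((5/16)^I * f k) = (5/8:ℝ)^I * ((k:ℝ) * f k) := by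
            rw [show (5/8:ℝ) = 2 * (5/16) by norm_num, mul_pow]; ring
          linarith [hb2]
        rw [Finset.sum_range_succ, add_mul]
        linarith [ih]
  -- pass to the limit
  have hgeom : ∀ I : ℕ, (∑ i ∈ range I, (5/8:ℝ)^i) ≤ 8/3 := by
    intro I
    rw [geom_sum_eq (by norm_num : (5/8:ℝ) ≠ 1)]
    have h1 : (0:ℝ) ≤ (5/8:ℝ)^I := by positivity
    have h2 : (5/8:ℝ)^I ≤ 1 := pow_le_one₀ (by norm_num) (by norm_num)
    rw [div_le_iff_of_neg (by norm_num : (5/8:ℝ) - 1 < 0)]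
    linarith
  have hbound : ∀ I : ℕ, Sk f k ≤ 8/3 * ((k:ℝ) * f k) + Sk f (2^I * k) := by
    intro I
    have hkf : (0:ℝ) ≤ (k:ℝ) * f k := mul_nonneg (Nat.cast_nonneg k) (hpos k).le
    have := hstep I
    nlinarith [hgeom I]
  have htend : Tendsto (fun I => (8/3:ℝ) * ((k:ℝ) * f k) + Sk f (2^I * k)) atTop
      (nhds (8/3 * ((k:ℝ) * f k) + 0)) := by
    apply Tendsto.const_add
    apply (Sk_tendsto_zero f hsum).comp
    apply tendsto_atTop_mono (fun I => ?_) tendsto_id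
    calc (id I : ℕ) = I := rfl
      _ ≤ 2^I := (Nat.lt_two_pow_self (n := I)).le
      _ ≤ 2^I * k := Nat.le_mul_of_pos_right _ (by omega : 0 < k)
  have : Sk f k ≤ 8/3 * ((k:ℝ) * f k) + 0 := ge_of_tendsto htend (Eventually.of_forall hbound)
  have hkf : (0:ℝ) ≤ (k:ℝ) * f k := mul_nonneg (Nat.cast_nonneg k) (hpos k).le
  linarith
lemma Sk_upper_blocks (f : ℕ → ℝ) (hdec : Antitone f) (hsum : Summable fun m => f (m+1))
    (n c : ℕ) (J : ℕ) :
    Sk f (n*c) ≤ (c:ℝ) * (∑ j ∈ range J, f ((n+j)*c)) + Sk f ((n+J)*c) := by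
  induction J with
  | zero => simp
  | succ J ih =>
      have hle : (n+J)*c ≤ (n+J+1)*c := Nat.mul_le_mul_right c (by omega)
      have hsplit := Sk_split f hsum hle
      have hblock := sum_Ioc_le f hdec hle
      have hcard : (((n+J+1)*c - (n+J)*c : ℕ) : ℝ) = c := by
        have : (n+J+1)*c - (n+J)*c = c := by ring_nf; omega
        rw [this]
      rw [hcard] at hblock
      rw [Finset.sum_range_succ]
      have : Sk f ((n+J)*c) ≤ (c:ℝ) * f ((n+J)*c) + Sk f ((n+J+1)*c) := by
        rw [hsplit]; linarith
      calc Sk f (n*c) ≤ (c:ℝ) * (∑ j ∈ range J, f ((n+j)*c)) + Sk f ((n+J)*c) := ih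
        _ ≤ (c:ℝ) * (∑ j ∈ range J, f ((n+j)*c)) + ((c:ℝ) * f ((n+J)*c) + Sk f ((n+J+1)*c)) := by
            linarith
        _ = (c:ℝ) * ((∑ j ∈ range J, f ((n+j)*c)) + f ((n+J)*c)) + Sk f ((n+J+1)*c) := by ring
  
lemma Sk_lower_blocks (f : ℕ → ℝ) (hdec : Antitone f) (hsum : Summable fun m => f (m+1))
    (n c : ℕ) (J : ℕ) :
    (c:ℝ) * (∑ j ∈ range J, f ((n+j+1)*c)) + Sk f ((n+J)*c) ≤ Sk f (n*c) := by
  induction J with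
  | zero => simp
  | succ J ih =>
      have hle : (n+J)*c ≤ (n+J+1)*c := Nat.mul_le_mul_right c (by omega)
      have hsplit := Sk_split f hsum hle
      have hblock := sum_Ioc_ge f hdec hle
      have hcard : (((n+J+1)*c - (n+J)*c : ℕ) : ℝ) = c := by
        have : (n+J+1)*c - (n+J)*c = c := by ring_nf; omega
        rw [this]
      rw [hcard] at hblock
      rw [Finset.sum_range_succ]
      have : (c:ℝ) * f ((n+J+1)*c) + Sk f ((n+J+1)*c) ≤ Sk f ((n+J)*c) := by
        rw [hsplit]; linarith
      calc (c:ℝ) * ((∑ j ∈ range J, f ((n+j+1)*c)) + f ((n+J+1)*c)) + Sk f ((n+J+1)*c)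
          = (c:ℝ) * (∑ j ∈ range J, f ((n+j+1)*c)) + ((c:ℝ) * f ((n+J+1)*c) + Sk f ((n+J+1)*c)) := by
            ring
        _ ≤ (c:ℝ) * (∑ j ∈ range J, f ((n+j+1)*c)) + Sk f ((n+J)*c) := by linarith
        _ ≤ Sk f (n*c) := ih

lemma sum_inv_sq_le (n : ℕ) (J : ℕ) (hn : 1 ≤ n) :
    ∑ j ∈ range J, 1/((n:ℝ)+j)^2 ≤ 1/(n:ℝ) + 1/(n:ℝ)^2 := by
  have hncast : (1:ℝ) ≤ (n:ℝ) := by exact_mod_cast hn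
  have htel : ∀ K : ℕ, ∑ j ∈ range K, (1/((n:ℝ)+j) - 1/((n:ℝ)+j+1))
      = 1/(n:ℝ) - 1/((n:ℝ)+K) := by
    intro K
    have h := Finset.sum_range_sub' (fun j : ℕ => 1/((n:ℝ)+j)) K
    push_cast at h
    simp only [add_zero] at h
    rw [← h]
    exact Finset.sum_congr rfl fun j _ => by ring
  cases J with
  | zero => simp; positivity
  | succ J =>
      rw [Finset.sum_range_succ']
      have h1 : ∑ j ∈ range J, 1/((n:ℝ)+(j+1:ℕ))^2 ≤ 1/(n:ℝ) := by
        have hterm : ∀ j ∈ range J, 1/((n:ℝ)+(j+1:ℕ))^2 ≤ 1/((n:ℝ)+j) - 1/((n:ℝ)+j+1) := by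
          intro j _
          have hnj : (0:ℝ) < (n:ℝ)+j := by positivity
          have hnj1 : (0:ℝ) < (n:ℝ)+j+1 := by linarith
          have hcast : ((j+1:ℕ):ℝ) = (j:ℝ)+1 := by push_cast; ring
          rw [hcast, div_sub_div _ _ (ne_of_gt hnj) (ne_of_gt hnj1),
            div_le_div_iff₀ (by positivity) (by positivity)]
          nlinarith
        calc ∑ j ∈ range J, 1/((n:ℝ)+(j+1:ℕ))^2
            ≤ ∑ j ∈ range J, (1/((n:ℝ)+j) - 1/((n:ℝ)+j+1)) := Finset.sum_le_sum hterm
          _ = 1/(n:ℝ) - 1/((n:ℝ)+J) := htel J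
          _ ≤ 1/(n:ℝ) := by
              have : (0:ℝ) ≤ 1/((n:ℝ)+J) := by positivity
              linarith
      have h0 : 1/((n:ℝ)+(0:ℕ))^2 = 1/(n:ℝ)^2 := by norm_num
      rw [h0]
      linarith

lemma sum_inv_sq_ge (n : ℕ) (J : ℕ) (hn : 1 ≤ n) :
    1/(n:ℝ) - 1/((n:ℝ)+J) ≤ ∑ j ∈ range J, 1/((n:ℝ)+j)^2 := by
  have hncast : (1:ℝ) ≤ (n:ℝ) := by exact_mod_cast hn
  have htel : ∑ j ∈ range J, (1/((n:ℝ)+j) - 1/((n:ℝ)+j+1))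
      = 1/(n:ℝ) - 1/((n:ℝ)+J) := by
    have h := Finset.sum_range_sub' (fun j : ℕ => 1/((n:ℝ)+j)) J
    push_cast at h
    simp only [add_zero] at h
    rw [← h]
    exact Finset.sum_congr rfl fun j _ => by ring
  have hterm : ∀ j ∈ range J, 1/((n:ℝ)+j) - 1/((n:ℝ)+j+1) ≤ 1/((n:ℝ)+j)^2 := by
    intro j _
    have hnj : (0:ℝ) < (n:ℝ)+j := by positivity
    have hnj1 : (0:ℝ) < (n:ℝ)+j+1 := by linarith
    rw [div_sub_div _ _ (ne_of_gt hnj) (ne_of_gt hnj1),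
      div_le_div_iff₀ (by positivity) (by positivity)]
    nlinarith
  rw [← htel]
  exact Finset.sum_le_sum hterm
lemma ratio_numeric {ε x : ℝ} (hε : 0 < ε) (hε2 : ε ≤ 1/2) (hx : 4 ≤ ε * x) :
    (1-ε) * ((1+ε/8) * (x+1)^2) ≤ (1-ε/8) * x^2 := by
  have hx8 : 8 ≤ x := by nlinarith
  have h1 : 4*x ≤ ε*x^2 := by nlinarith
  nlinarith [mul_nonneg (by linarith : (0:ℝ) ≤ 2*x+1) (by nlinarith : (0:ℝ) ≤ 7*ε/8 + ε^2/8),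
    mul_nonneg (mul_nonneg hε.le hε.le) (sq_nonneg x)]

lemma ratio_one (f : ℕ → ℝ) (hpos : ∀ k, 0 < f k) (hdec : Antitone f)
    (hq : ∀ q : ℕ, 1 ≤ q → Tendsto (fun k => (q:ℝ)^2 * f (q*k) / f k) atTop (nhds 1)) :
    Tendsto (fun b => f (b+1) / f b) atTop (nhds 1) := by
  apply aux_tendsto_one
  intro ε hε hε2
  set δ := ε/8 with hδdef
  have hδ : 0 < δ := by positivity
  have hδ1 : (0:ℝ) < 1 - δ := by rw [hδdef]; linarith
  have hδ2 : (0:ℝ) < 1 + δ := by rw [hδdef]; linarith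
  set n := max 1 ⌈(4:ℝ)/ε⌉₊ with hndef
  have hn1 : 1 ≤ n := le_max_left _ _
  have hn4 : 4/ε ≤ (n:ℝ) := by
    calc (4:ℝ)/ε ≤ (⌈(4:ℝ)/ε⌉₊ : ℝ) := Nat.le_ceil _
      _ ≤ (n:ℝ) := by exact_mod_cast Nat.cast_le.mpr (le_max_right _ _)
  have hεn : 4 ≤ ε * (n:ℝ) := by
    rw [div_le_iff₀ hε] at hn4; linarith [hn4]
  have hu1 := unif f hpos hq n hn1 hδ
  have hu2 := unif f hpos hq (n+1) (by omega) hδ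
  obtain ⟨M, hM⟩ := eventually_atTop.mp (hu1.and hu2)
  rw [eventually_atTop]
  refine ⟨(n+1)*M + (n+1)*n + 1, fun b hb => ?_⟩
  set c := (b+1+n)/(n+1) with hcdef
  set P := (n+1)*c with hPdef
  set r := (b+1+n)%(n+1) with hrdef
  have hdm : P + r = b+1+n := Nat.div_add_mod _ _
  have hr : r < n+1 := Nat.mod_lt _ (by omega)
  have hc1 : b+1 ≤ P := by omega
  have hRM : (n+1)*M ≤ b := by omega
  have hRn : (n+1)*n ≤ b := by omega
  have hcM : M ≤ c := by
    by_contra h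
    push_neg at h
    have : P + (n+1) ≤ (n+1)*M := by
      calc P + (n+1) = (n+1)*(c+1) := by rw [hPdef]; ring
        _ ≤ (n+1)*M := Nat.mul_le_mul_left _ (by omega)
    omega
  have hcn : n+1 ≤ c := by
    by_contra h
    push_neg at h
    have : P ≤ (n+1)*n := Nat.mul_le_mul_left _ (by omega)
    omega
  have hQ : P = n*c + c := by rw [hPdef]; ring
  have hnc : n*c ≤ b := by
    set Q := n*c
    omega
  obtain ⟨⟨hl1, hl2⟩, ⟨hl3, hl4⟩⟩ := hM c hcM
  have hb1 : f ((n+1)*c) ≤ f (b+1) := hdec hc1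
  have hb2 : f b ≤ f (n*c) := hdec hnc
  have hfb := hpos b
  have hfb1 := hpos (b+1)
  have hfc := hpos c
  have hcast : ((n+1:ℕ):ℝ) = (n:ℝ)+1 := by push_cast; ring
  rw [hcast] at hl3 hl4
  have e1 : (1-δ) * f c ≤ ((n:ℝ)+1)^2 * f (b+1) := by
    calc (1-δ) * f c ≤ ((n:ℝ)+1)^2 * f ((n+1)*c) := hl3
      _ ≤ ((n:ℝ)+1)^2 * f (b+1) := by
          apply mul_le_mul_of_nonneg_left hb1 (by positivity)
  have e2 : (n:ℝ)^2 * f b ≤ (1+δ) * f c := by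
    calc (n:ℝ)^2 * f b ≤ (n:ℝ)^2 * f (n*c) := by
          apply mul_le_mul_of_nonneg_left hb2 (by positivity)
      _ ≤ (1+δ) * f c := hl2
  have e3 : (1-δ) * ((n:ℝ)^2 * f b) ≤ (1+δ) * (((n:ℝ)+1)^2 * f (b+1)) :=
    calc (1-δ) * ((n:ℝ)^2 * f b) ≤ (1-δ) * ((1+δ) * f c) :=
          mul_le_mul_of_nonneg_left e2 hδ1.le
      _ = (1+δ) * ((1-δ) * f c) := by ring
      _ ≤ (1+δ) * (((n:ℝ)+1)^2 * f (b+1)) := mul_le_mul_of_nonneg_left e1 hδ2.le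
  have e4 : (1-ε) * ((1+δ) * ((n:ℝ)+1)^2) ≤ (1-δ) * (n:ℝ)^2 := by
    rw [hδdef]; exact ratio_numeric hε hε2 hεn
  have key : (1-ε) * f b ≤ f (b+1) := by
    have e5 : ((1+δ)*((n:ℝ)+1)^2) * ((1-ε) * f b) ≤ ((1+δ)*((n:ℝ)+1)^2) * f (b+1) := by
      calc ((1+δ)*((n:ℝ)+1)^2) * ((1-ε)*f b) = ((1-ε)*((1+δ)*((n:ℝ)+1)^2)) * f b := by ring
        _ ≤ ((1-δ)*(n:ℝ)^2) * f b := mul_le_mul_of_nonneg_right e4 hfb.le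
        _ = (1-δ)*((n:ℝ)^2*f b) := by ring
        _ ≤ (1+δ)*(((n:ℝ)+1)^2 * f (b+1)) := e3
        _ = ((1+δ)*((n:ℝ)+1)^2) * f (b+1) := by ring
    exact le_of_mul_le_mul_left e5 (by positivity)
  have keyup : f (b+1) ≤ f b := hdec (by omega)
  rw [abs_le]
  constructor
  · have : 1-ε ≤ f (b+1)/f b := by rw [le_div_iff₀ hfb]; linarith
    linarith
  · have : f (b+1)/f b ≤ 1 := by rw [div_le_one hfb]; exact keyup
    linarith
lemma up_key {ε V X : ℝ} (hε : 0 < ε) (hε2 : ε ≤ 1/2) (hV : 16 ≤ ε*V) (hX : V ≤ X) :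
    (1+ε/16)*V + X*(1-ε/16)*((1+ε/16)*(V+1)) + 4*X*(1-ε/16)
      ≤ (1+ε)*(1-ε/16)^2*(V*(X-1)) := by
  have hV32 : 32 ≤ V := by nlinarith
  have hX32 : 32 ≤ X := by linarith
  have h0 : (0:ℝ) < V := by linarith
  have h1 : (0:ℝ) < X := by linarith
  have hεVX : 16*X ≤ ε*V*X := mul_le_mul_of_nonneg_right hV h1.le
  have hεε : ε*ε ≤ (1/2)*ε := mul_le_mul_of_nonneg_right hε2 hε.le
  have hεVXnn : 0 ≤ ε*(V*X) := by positivity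
  have hεεVX : ε*(ε*(V*X)) ≤ (1/2)*(ε*(V*X)) := mul_le_mul_of_nonneg_right hε2 hεVXnn
  nlinarith [mul_le_mul_of_nonneg_left hεεVX hε.le, mul_pos h0 h1,
    mul_le_mul_of_nonneg_right hεVX hε.le, mul_nonneg hε.le (mul_pos h0 h1).le]

lemma low_key {ε V : ℝ} (hε : 0 < ε) (hε2 : ε ≤ 1/2) (hV : 16 ≤ ε*V) :
    (1-ε)*(1+ε/16)*(V*(V+1)) ≤ (1-ε/16)^2*(V^2-V-1) := by
  have hV32 : 32 ≤ V := by nlinarith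
  have h0 : (0:ℝ) < V := by linarith
  have hεVV : 16*V ≤ ε*V*V := mul_le_mul_of_nonneg_right hV h0.le
  have hεε : ε*ε ≤ (1/2)*ε := mul_le_mul_of_nonneg_right hε2 hε.le
  nlinarith [mul_le_mul_of_nonneg_right hεVV hε.le, sq_nonneg V, mul_pos h0 h0,
    mul_nonneg hε.le (mul_pos h0 h0).le,
    mul_le_mul_of_nonneg_right hεε (mul_pos h0 h0).le]

lemma tail_numeric {δ V G : ℝ} (hδ : 0 ≤ δ) (hδ2 : δ ≤ 1/3) (hV : 1 ≤ V) (hG : 0 ≤ G) :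
    3*((V+V*V)*((1+δ)*G/(V+V*V)^2)) ≤ 4*(G*(1/V^2)) := by
  have h0 : (0:ℝ) < V := by linarith
  have hW : (0:ℝ) < V+V*V := by nlinarith
  have h1 : 3*((V+V*V)*((1+δ)*G/(V+V*V)^2)) = 3*(1+δ)*G/(V+V*V) := by
    field_simp
  rw [h1, div_le_iff₀ hW]
  have h2 : 4*(G*(1/V^2)) = 4*G/V^2 := by ring
  rw [h2]
  rw [div_mul_eq_mul_div, le_div_iff₀ (by positivity : (0:ℝ) < V^2)]
  nlinarith [mul_nonneg hG (mul_pos h0 h0).le, mul_nonneg (mul_nonneg hG h0.le) h0.le]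
set_option maxHeartbeats 1000000 in
lemma karamata_eps (f : ℕ → ℝ) (hpos : ∀ k, 0 < f k) (hdec : Antitone f)
    (hsum : Summable fun m => f (m+1))
    (hq : ∀ q : ℕ, 1 ≤ q → Tendsto (fun k => (q:ℝ)^2 * f (q*k) / f k) atTop (nhds 1))
    {ε : ℝ} (hε : 0 < ε) (hε2 : ε ≤ 1/2) :
    ∀ᶠ k : ℕ in atTop, (1-ε) * ((k:ℝ) * f k) ≤ Sk f k ∧ Sk f k ≤ (1+ε) * ((k:ℝ) * f k) := by
  set δ := ε/16 with hδdef
  have hδ0 : 0 < δ := by positivity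
  have hδ13 : δ ≤ 1/3 := by rw [hδdef]; linarith
  have hd1 : (0:ℝ) < 1 - δ := by rw [hδdef]; linarith
  have hd2 : (0:ℝ) < 1 + δ := by rw [hδdef]; linarith
  set n := max 2 ⌈(16:ℝ)/ε⌉₊ with hndef
  have hn2 : 2 ≤ n := le_max_left _ _
  have hn1 : 1 ≤ n := by omega
  have hn16 : 16/ε ≤ (n:ℝ) := by
    calc (16:ℝ)/ε ≤ (⌈(16:ℝ)/ε⌉₊ : ℝ) := Nat.le_ceil _
      _ ≤ (n:ℝ) := by exact_mod_cast Nat.cast_le.mpr (le_max_right _ _)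
  have hεn : 16 ≤ ε * (n:ℝ) := by rw [div_le_iff₀ hε] at hn16; linarith
  set J := n*n with hJdef
  have hAll : ∀ᶠ m in atTop, ∀ q ∈ Finset.Icc 1 (n+J+1),
      (1-δ) * f m ≤ (q:ℝ)^2 * f (q*m) ∧ (q:ℝ)^2 * f (q*m) ≤ (1+δ) * f m :=
    (Finset.Icc 1 (n+J+1)).eventually_all.2
      (fun q hqm => unif f hpos hq q (Finset.mem_Icc.mp hqm).1 hδ0)
  have hdouble : ∀ᶠ m in atTop, f (2*m) ≤ 5/16 * f m := by
    filter_upwards [unif f hpos hq 2 (by omega) (by norm_num : (0:ℝ) < 1/4)] with m hm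
    have h2 : ((2:ℕ):ℝ)^2 * f (2*m) ≤ (1+1/4) * f m := hm.2
    have h3 : (4:ℝ) * f (2*m) ≤ (5/4) * f m := by push_cast at h2; linarith
    linarith
  have hratio : ∀ᶠ b in atTop, (1-δ) * f b ≤ f (b+1) := by
    have h := Metric.tendsto_nhds.mp (ratio_one f hpos hdec hq) δ hδ0
    filter_upwards [h] with b hb
    rw [Real.dist_eq, abs_lt] at hb
    have h1 : 1-δ < f (b+1)/f b := by linarith [hb.1]
    calc (1-δ)*f b ≤ (f (b+1)/f b)*f b := mul_le_mul_of_nonneg_right h1.le (hpos b).le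
      _ = f (b+1) := by rw [div_mul_eq_mul_div, mul_div_assoc, div_self (hpos b).ne', mul_one]
  obtain ⟨M0, hM0⟩ := eventually_atTop.mp ((hAll.and hdouble).and hratio)
  set M := M0 + 1 with hMdef
  have hM : ∀ m, M ≤ m → ((∀ q ∈ Finset.Icc 1 (n+J+1),
      (1-δ)*f m ≤ (q:ℝ)^2*f (q*m) ∧ (q:ℝ)^2*f (q*m) ≤ (1+δ)*f m)
      ∧ f (2*m) ≤ 5/16*f m) ∧ (1-δ)*f m ≤ f (m+1) :=
    fun m hm => hM0 m (by omega)
  set A := n*M with hAdef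
  rw [eventually_atTop]
  refine ⟨A + J + 2*n + 2, fun k hk => ?_⟩
  -- ceil division
  set c := (k+n-1)/n with hcdef
  set Q := n*c with hQdef
  set r := (k+n-1)%n with hrdef
  have hdm : Q + r = k+n-1 := by rw [hQdef, hrdef, hcdef]; exact Nat.div_add_mod _ _
  have hrlt : r < n := Nat.mod_lt _ (by omega)
  have hkQ : k ≤ Q := by omega
  have hQk : Q ≤ k+n-1 := by omega
  have hcM : M + 1 ≤ c := by
    by_contra h
    push_neg at h
    have h2 : Q ≤ A := by
      rw [hQdef, hAdef]
      exact Nat.mul_le_mul_left _ (by omega)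
    omega
  have hcn : n ≤ c := by
    by_contra h
    push_neg at h
    have h2 : Q ≤ J := by
      rw [hQdef, hJdef]
      exact Nat.mul_le_mul_left _ (by omega)
    omega
  have hc2 : 2 ≤ c := by omega
  -- real versions
  have hVpos : (0:ℝ) < (n:ℝ) := by exact_mod_cast (by omega : 0 < n)
  have hV2 : (2:ℝ) ≤ (n:ℝ) := by exact_mod_cast hn2
  have hXpos : (0:ℝ) < (c:ℝ) := by exact_mod_cast (by omega : 0 < c)
  have hVX : (n:ℝ) ≤ (c:ℝ) := by exact_mod_cast hcn
  have hQcast : ((Q:ℕ):ℝ) = (n:ℝ)*(c:ℝ) := by rw [hQdef]; push_cast; ring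
  have hkQR : (k:ℝ) ≤ (n:ℝ)*(c:ℝ) := by
    rw [← hQcast]; exact_mod_cast hkQ
  have hklow : (n:ℝ)*((c:ℝ)-1) ≤ (k:ℝ) := by
    have h1 : ((Q:ℕ):ℝ) ≤ ((k+n-1:ℕ):ℝ) := by exact_mod_cast hQk
    have h2 : ((k+n-1:ℕ):ℝ) = (k:ℝ)+(n:ℝ)-1 := by
      have : 1 ≤ k+n := by omega
      push_cast [Nat.cast_sub this]
      ring
    rw [hQcast, h2] at h1
    nlinarith
  have hfc := hpos c
  -- block bounds
  have hup_blocks := Sk_upper_blocks f hdec hsum n c J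
  have hlow_blocks := Sk_lower_blocks f hdec hsum n c J
  -- upper sum bound
  have hsumUp : ∑ j ∈ range J, f ((n+j)*c) ≤ (1+δ)*f c*(1/(n:ℝ) + 1/(n:ℝ)^2) := by
    have hterm : ∀ j ∈ range J, f ((n+j)*c) ≤ (1+δ)*f c*(1/((n:ℝ)+j)^2) := by
      intro j hj
      have hjJ : j < J := Finset.mem_range.mp hj
      have hmem : n+j ∈ Finset.Icc 1 (n+J+1) := Finset.mem_Icc.mpr ⟨by omega, by omega⟩
      have h1 := (((hM c (by omega)).1.1) (n+j) hmem).2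
      have hcast : ((n+j:ℕ):ℝ) = (n:ℝ)+j := by push_cast; ring
      rw [hcast] at h1
      have hp2 : (0:ℝ) < ((n:ℝ)+j)^2 := by positivity
      calc f ((n+j)*c) = (((n:ℝ)+j)^2 * f ((n+j)*c))/((n:ℝ)+j)^2 := by field_simp
        _ ≤ ((1+δ)*f c)/((n:ℝ)+j)^2 := by
            exact (div_le_div_iff_of_pos_right hp2).mpr h1
        _ = (1+δ)*f c*(1/((n:ℝ)+j)^2) := by ring
    calc ∑ j ∈ range J, f ((n+j)*c) ≤ ∑ j ∈ range J, (1+δ)*f c*(1/((n:ℝ)+j)^2) :=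
          Finset.sum_le_sum hterm
      _ = (1+δ)*f c * ∑ j ∈ range J, 1/((n:ℝ)+j)^2 := by rw [Finset.mul_sum]
      _ ≤ (1+δ)*f c*(1/(n:ℝ) + 1/(n:ℝ)^2) := by
          apply mul_le_mul_of_nonneg_left (sum_inv_sq_le n J hn1) (by positivity)
  -- lower sum bound
  have hsumLow : (1-δ)*f c*(1/((n:ℝ)+1) - 1/(n:ℝ)^2) ≤ ∑ j ∈ range J, f ((n+j+1)*c) := by
    have hterm : ∀ j ∈ range J, (1-δ)*f c*(1/(((n:ℝ)+1)+j)^2) ≤ f ((n+j+1)*c) := by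
      intro j hj
      have hjJ : j < J := Finset.mem_range.mp hj
      have hmem : n+j+1 ∈ Finset.Icc 1 (n+J+1) := Finset.mem_Icc.mpr ⟨by omega, by omega⟩
      have h1 := (((hM c (by omega)).1.1) (n+j+1) hmem).1
      have hcast : ((n+j+1:ℕ):ℝ) = ((n:ℝ)+1)+j := by push_cast; ring
      rw [hcast] at h1
      have hp2 : (0:ℝ) < (((n:ℝ)+1)+j)^2 := by positivity
      rw [show (1-δ)*f c*(1/(((n:ℝ)+1)+j)^2) = ((1-δ)*f c)/(((n:ℝ)+1)+j)^2 by ring,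
        div_le_iff₀ hp2]
      calc (1-δ)*f c ≤ (((n:ℝ)+1)+j)^2 * f ((n+j+1)*c) := h1
        _ = f ((n+j+1)*c) * (((n:ℝ)+1)+j)^2 := by ring
    have hs := sum_inv_sq_ge (n+1) J (by omega)
    have hcast1 : ((n+1:ℕ):ℝ) = (n:ℝ)+1 := by push_cast; ring
    rw [hcast1] at hs
    have hJV : 1/((n:ℝ)+1+(J:ℝ)) ≤ 1/(n:ℝ)^2 := by
      apply one_div_le_one_div_of_le (by positivity)
      have hJc : ((J:ℕ):ℝ) = (n:ℝ)*(n:ℝ) := by rw [hJdef]; push_cast; ring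
      rw [hJc]; nlinarith
    calc (1-δ)*f c*(1/((n:ℝ)+1) - 1/(n:ℝ)^2)
        ≤ (1-δ)*f c*(1/((n:ℝ)+1) - 1/((n:ℝ)+1+(J:ℝ))) := by
          apply mul_le_mul_of_nonneg_left _ (by positivity)
          linarith
      _ ≤ (1-δ)*f c * ∑ j ∈ range J, 1/(((n:ℝ)+1)+j)^2 := by
          apply mul_le_mul_of_nonneg_left hs (by positivity)
      _ = ∑ j ∈ range J, (1-δ)*f c*(1/(((n:ℝ)+1)+j)^2) := by rw [Finset.mul_sum]
      _ ≤ ∑ j ∈ range J, f ((n+j+1)*c) := Finset.sum_le_sum hterm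
  -- tail bound
  have htailb : Sk f ((n+J)*c) ≤ 4*(((c:ℝ)*f c)*(1/(n:ℝ)^2)) := by
    have hMc : M ≤ (n+J)*c := le_trans (by omega : M ≤ c) (Nat.le_mul_of_pos_left c (by omega))
    have hcrude := Sk_crude f hpos hdec hsum M (fun m hm => (hM m hm).1.2) ((n+J)*c) hMc
      (by have := Nat.mul_pos (show 0 < n+J by omega) (show 0 < c by omega); omega)
    have hmem : n+J ∈ Finset.Icc 1 (n+J+1) := Finset.mem_Icc.mpr ⟨by omega, by omega⟩
    have h1 := (((hM c (by omega)).1.1) (n+J) hmem).2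
    have hcast : ((n+J:ℕ):ℝ) = (n:ℝ)+(n:ℝ)*(n:ℝ) := by rw [hJdef]; push_cast; ring
    rw [hcast] at h1
    have hW : (0:ℝ) < (n:ℝ)+(n:ℝ)*(n:ℝ) := by nlinarith
    have hfle : f ((n+J)*c) ≤ (1+δ)*f c/((n:ℝ)+(n:ℝ)*(n:ℝ))^2 := by
      rw [le_div_iff₀ (by positivity)]
      calc f ((n+J)*c) * ((n:ℝ)+(n:ℝ)*(n:ℝ))^2 = ((n:ℝ)+(n:ℝ)*(n:ℝ))^2 * f ((n+J)*c) := by ring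
        _ ≤ (1+δ)*f c := h1
    have hcastnJc : (((n+J)*c:ℕ):ℝ) = ((n:ℝ)+(n:ℝ)*(n:ℝ))*(c:ℝ) := by
      rw [hJdef]; push_cast; ring
    calc Sk f ((n+J)*c) ≤ 3*((((n+J)*c:ℕ):ℝ) * f ((n+J)*c)) := hcrude
      _ = 3*(((n:ℝ)+(n:ℝ)*(n:ℝ))*((c:ℝ) * f ((n+J)*c))) := by rw [hcastnJc]; ring
      _ ≤ 3*(((n:ℝ)+(n:ℝ)*(n:ℝ))*((1+δ)*((c:ℝ)*f c)/((n:ℝ)+(n:ℝ)*(n:ℝ))^2)) := by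
          apply mul_le_mul_of_nonneg_left _ (by norm_num)
          apply mul_le_mul_of_nonneg_left _ hW.le
          calc (c:ℝ) * f ((n+J)*c) ≤ (c:ℝ) * ((1+δ)*f c/((n:ℝ)+(n:ℝ)*(n:ℝ))^2) :=
                mul_le_mul_of_nonneg_left hfle hXpos.le
            _ = (1+δ)*((c:ℝ)*f c)/((n:ℝ)+(n:ℝ)*(n:ℝ))^2 := by ring
      _ ≤ 4*(((c:ℝ)*f c)*(1/(n:ℝ)^2)) :=
          tail_numeric hδ0.le hδ13 (by linarith) (by positivity)
  -- relating Sk f k and Sk f (n*c)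
  have hknc : k ≤ n*c := by omega
  have hsplitk := Sk_split f hsum hknc
  have hextra : Sk f k ≤ (n:ℝ) * f k + Sk f (n*c) := by
    have hioc := sum_Ioc_le f hdec hknc
    have hcard : ((n*c - k:ℕ):ℝ) ≤ (n:ℝ) := by
      have : n*c - k ≤ n := by omega
      exact_mod_cast this
    rw [hsplitk]
    have h2 : ∑ j ∈ Finset.Ioc k (n*c), f j ≤ (n:ℝ) * f k := by
      calc ∑ j ∈ Finset.Ioc k (n*c), f j ≤ ((n*c - k:ℕ):ℝ) * f k := hioc
        _ ≤ (n:ℝ) * f k := mul_le_mul_of_nonneg_right hcard (hpos k).le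
    linarith
  have hlowk : Sk f (n*c) ≤ Sk f k := by
    rw [hsplitk]
    have h2 : 0 ≤ ∑ j ∈ Finset.Ioc k (n*c), f j := Finset.sum_nonneg fun i _ => (hpos i).le
    linarith
  -- bounds on f k
  have hmemn : n ∈ Finset.Icc 1 (n+J+1) := Finset.mem_Icc.mpr ⟨hn1, by omega⟩
  have hfklow : (1-δ)*f c/(n:ℝ)^2 ≤ f k := by
    have h1 := (((hM c (by omega)).1.1) n hmemn).1
    have h2 : f (n*c) ≤ f k := hdec hkQ
    rw [div_le_iff₀ (by positivity : (0:ℝ) < (n:ℝ)^2)]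
    have h3 : (n:ℝ)^2 * f (n*c) ≤ (n:ℝ)^2 * f k :=
      mul_le_mul_of_nonneg_left h2 (by positivity)
    linarith
  have hfkup : f k ≤ (1+δ)*f c/((1-δ)*(n:ℝ)^2) := by
    have hcc : c - 1 + 1 = c := by omega
    have hQ2 : n*(c-1) + n = Q := by
      rw [hQdef]
      conv_rhs => rw [← hcc]
      ring
    have hnck : n*(c-1) ≤ k := by
      set Q2 := n*(c-1)
      omega
    have h1 : f k ≤ f (n*(c-1)) := hdec hnck
    have h2 := (((hM (c-1) (by omega)).1.1) n hmemn).2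
    have h3 := (hM (c-1) (by omega)).2
    rw [hcc] at h3
    rw [le_div_iff₀ (by positivity : (0:ℝ) < (1-δ)*(n:ℝ)^2)]
    have h4 : f k * ((1-δ)*(n:ℝ)^2) ≤ f (n*(c-1)) * ((1-δ)*(n:ℝ)^2) :=
      mul_le_mul_of_nonneg_right h1 (by positivity)
    have h5 : f (n*(c-1)) * ((1-δ)*(n:ℝ)^2) = (1-δ)*((n:ℝ)^2 * f (n*(c-1))) := by ring
    have h6 : (1-δ)*((n:ℝ)^2*f (n*(c-1))) ≤ (1-δ)*((1+δ)*f (c-1)) :=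
      mul_le_mul_of_nonneg_left h2 hd1.le
    have h7 : (1-δ)*((1+δ)*f (c-1)) = (1+δ)*((1-δ)*f (c-1)) := by ring
    have h8 : (1+δ)*((1-δ)*f (c-1)) ≤ (1+δ)*f c := mul_le_mul_of_nonneg_left h3 hd2.le
    linarith
  constructor
  · -- lower bound
    have hSlow : ((c:ℝ))*((1-δ)*f c*(1/((n:ℝ)+1) - 1/(n:ℝ)^2)) ≤ Sk f (n*c) := by
      have h1 : ((c:ℝ)) * ((1-δ)*f c*(1/((n:ℝ)+1) - 1/(n:ℝ)^2))
          ≤ ((c:ℝ)) * ∑ j ∈ range J, f ((n+j+1)*c) := by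
        apply mul_le_mul_of_nonneg_left hsumLow hXpos.le
      have h2 := Sk_nonneg f hpos ((n+J)*c)
      linarith [hlow_blocks]
    have hkfkup : (k:ℝ)*f k ≤ ((n:ℝ)*(c:ℝ))*((1+δ)*f c/((1-δ)*(n:ℝ)^2)) :=
      mul_le_mul hkQR hfkup (hpos k).le (by positivity)
    have hident1 : (1-ε)*(((n:ℝ)*(c:ℝ))*((1+δ)*f c/((1-δ)*(n:ℝ)^2)))
        = ((1-ε)*(1+δ)*((n:ℝ)*((n:ℝ)+1))) * (((c:ℝ)*f c)/((1-δ)*(n:ℝ)^2*((n:ℝ)+1))) := by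
      field_simp
    have hident2 : ((c:ℝ))*((1-δ)*f c*(1/((n:ℝ)+1) - 1/(n:ℝ)^2))
        = ((1-δ)^2*((n:ℝ)^2-(n:ℝ)-1)) * (((c:ℝ)*f c)/((1-δ)*(n:ℝ)^2*((n:ℝ)+1))) := by
      field_simp
      ring
    have hkey := low_key hε hε2 hεn
    have hfrac : (0:ℝ) ≤ ((c:ℝ)*f c)/((1-δ)*(n:ℝ)^2*((n:ℝ)+1)) := by positivity
    have hmain : (1-ε)*(((n:ℝ)*(c:ℝ))*((1+δ)*f c/((1-δ)*(n:ℝ)^2)))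
        ≤ ((c:ℝ))*((1-δ)*f c*(1/((n:ℝ)+1) - 1/(n:ℝ)^2)) := by
      rw [hident1, hident2]
      apply mul_le_mul_of_nonneg_right _ hfrac
      rw [hδdef]
      convert low_key hε hε2 hεn using 2
    have h1ε : (0:ℝ) ≤ 1-ε := by linarith
    calc (1-ε)*((k:ℝ)*f k) ≤ (1-ε)*(((n:ℝ)*(c:ℝ))*((1+δ)*f c/((1-δ)*(n:ℝ)^2))) :=
          mul_le_mul_of_nonneg_left hkfkup h1ε
      _ ≤ ((c:ℝ))*((1-δ)*f c*(1/((n:ℝ)+1) - 1/(n:ℝ)^2)) := hmain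
      _ ≤ Sk f (n*c) := hSlow
      _ ≤ Sk f k := hlowk
  · -- upper bound
    have hSup : Sk f (n*c) ≤ (c:ℝ)*((1+δ)*f c*(1/(n:ℝ)+1/(n:ℝ)^2)) + 4*(((c:ℝ)*f c)*(1/(n:ℝ)^2)) := by
      have h1 : (c:ℝ) * (∑ j ∈ range J, f ((n+j)*c)) ≤ (c:ℝ)*((1+δ)*f c*(1/(n:ℝ)+1/(n:ℝ)^2)) :=
        mul_le_mul_of_nonneg_left hsumUp hXpos.le
      linarith [hup_blocks, htailb]
    have hVfk : (n:ℝ) * f k ≤ (n:ℝ)*((1+δ)*f c/((1-δ)*(n:ℝ)^2)) :=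
      mul_le_mul_of_nonneg_left hfkup hVpos.le
    have hkfklow : ((n:ℝ)*((c:ℝ)-1))*((1-δ)*f c/(n:ℝ)^2) ≤ (k:ℝ)*f k := by
      apply mul_le_mul hklow hfklow (by positivity) (by positivity)
    have hident1 : (n:ℝ)*((1+δ)*f c/((1-δ)*(n:ℝ)^2)) + ((c:ℝ)*((1+δ)*f c*(1/(n:ℝ)+1/(n:ℝ)^2)) + 4*(((c:ℝ)*f c)*(1/(n:ℝ)^2)))
        = ((1+δ)*(n:ℝ) + (c:ℝ)*(1-δ)*((1+δ)*((n:ℝ)+1)) + 4*(c:ℝ)*(1-δ)) * (f c/((1-δ)*(n:ℝ)^2)) := by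
      field_simp
      ring
    have hident2 : (1+ε)*(((n:ℝ)*((c:ℝ)-1))*((1-δ)*f c/(n:ℝ)^2))
        = ((1+ε)*(1-δ)^2*((n:ℝ)*((c:ℝ)-1))) * (f c/((1-δ)*(n:ℝ)^2)) := by
      field_simp
    have hfrac : (0:ℝ) ≤ f c/((1-δ)*(n:ℝ)^2) := by positivity
    have hmain : (n:ℝ)*((1+δ)*f c/((1-δ)*(n:ℝ)^2)) + ((c:ℝ)*((1+δ)*f c*(1/(n:ℝ)+1/(n:ℝ)^2)) + 4*(((c:ℝ)*f c)*(1/(n:ℝ)^2)))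
        ≤ (1+ε)*(((n:ℝ)*((c:ℝ)-1))*((1-δ)*f c/(n:ℝ)^2)) := by
      rw [hident1, hident2]
      apply mul_le_mul_of_nonneg_right _ hfrac
      rw [hδdef]
      convert up_key hε hε2 hεn hVX using 2
    have h1ε : (0:ℝ) ≤ 1+ε := by linarith
    calc Sk f k ≤ (n:ℝ) * f k + Sk f (n*c) := hextra
      _ ≤ (n:ℝ)*((1+δ)*f c/((1-δ)*(n:ℝ)^2)) + ((c:ℝ)*((1+δ)*f c*(1/(n:ℝ)+1/(n:ℝ)^2)) + 4*(((c:ℝ)*f c)*(1/(n:ℝ)^2))) := by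
        linarith [hSup, hVfk]
      _ ≤ (1+ε)*(((n:ℝ)*((c:ℝ)-1))*((1-δ)*f c/(n:ℝ)^2)) := hmain
      _ ≤ (1+ε)*((k:ℝ)*f k) := mul_le_mul_of_nonneg_left hkfklow h1ε
lemma karamata_core (f : ℕ → ℝ) (hpos : ∀ k, 0 < f k) (hdec : Antitone f)
    (hsum : Summable fun m => f (m+1))
    (hq : ∀ q : ℕ, 1 ≤ q → Tendsto (fun k => (q:ℝ)^2 * f (q*k) / f k) atTop (nhds 1)) :
    Tendsto (fun k : ℕ => Sk f k / ((k:ℝ) * f k)) atTop (nhds 1) := by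
  apply aux_tendsto_one
  intro ε hε hε2
  filter_upwards [karamata_eps f hpos hdec hsum hq hε hε2, eventually_ge_atTop 1] with k hk hk1
  have hk0 : (0:ℝ) < (k:ℝ) := by exact_mod_cast (by omega : 0 < k)
  have hkf : (0:ℝ) < (k:ℝ)*f k := mul_pos hk0 (hpos k)
  rw [abs_le]
  constructor
  · have h1 : 1-ε ≤ Sk f k / ((k:ℝ)*f k) := (le_div_iff₀ hkf).mpr (by linarith [hk.1])
    linarith
  · have h1 : Sk f k / ((k:ℝ)*f k) ≤ 1+ε := (div_le_iff₀ hkf).mpr (by linarith [hk.2])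
    linarith

end KaramataAux

/-- Let `μ` have mean `1` and tail `μ([k,∞)) = L(k)/k²` with `L` slowly varying, and let
`(L₁,R₁)` have law `P((L₁,R₁)=(i,j)) = μ(i+j+1)`. Then, as `k → ∞`,
`P(R₁ ≥ k) ∼ L(k)/k` and `P(min(L₁,R₁) ≥ k) ∼ L(k)/(2k)`.
Here `P(R₁ ≥ k) = Σ_{m ≥ k} μ([m+1,∞))` and
`P(min(L₁,R₁) ≥ k) = Σ_{m ≥ k} (2μ([2m+1,∞)) − μ(2m+1))`. -/
theorem stmt_13 (μ : ℕ → ℝ) (L : ℝ → ℝ)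
    (hpos : ∀ k, 0 ≤ μ k)
    (hsum : ∑' k, μ k = 1)
    (hmean_summable : Summable (fun k : ℕ => (k : ℝ) * μ k))
    (hmean : ∑' k : ℕ, (k : ℝ) * μ k = 1)
    (hL : SlowlyVarying L)
    (htail : ∀ k : ℕ, 1 ≤ k → tailSum μ k = L k / (k : ℝ) ^ 2) :
    Tendsto (fun k : ℕ =>
        (∑' m : ℕ, tailSum μ ((k + m) + 1)) / (L k / k)) atTop (nhds 1) ∧
    Tendsto (fun k : ℕ =>
        (∑' m : ℕ, (2 * tailSum μ (2 * (k + m) + 1) - μ (2 * (k + m) + 1)))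
          / (L k / (2 * k))) atTop (nhds 1) := by
  classical
  have hμs : Summable μ := by
    by_contra h
    rw [tsum_eq_zero_of_not_summable h] at hsum
    norm_num at hsum
  set f := tailSum μ with hfdef
  have hshift : ∀ k, Summable fun i => μ (k+i) := by
    intro k
    have h := (summable_nat_add_iff (f := μ) k).2 hμs
    exact h.congr fun i => by rw [Nat.add_comm]
  have hstep : ∀ k, f k = μ k + f (k+1) := by
    intro k
    rw [hfdef]
    show tailSum μ k = μ k + tailSum μ (k+1)
    unfold tailSum
    rw [Summable.tsum_eq_zero_add (hshift k)]
    simp only [Nat.add_zero]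
    congr 1
    exact tsum_congr fun i => by congr 1; omega
  have hfnn : ∀ k, 0 ≤ f k := fun k => tsum_nonneg fun i => hpos _
  have hdec : Antitone f := antitone_nat_of_succ_le fun k => by
    have := hstep k
    have := hpos k
    linarith
  -- positivity of f
  have hLpos : ∀ᶠ x : ℝ in atTop, L x ≠ 0 := by
    have h1 := hL 1 one_pos
    have h2 := Metric.tendsto_nhds.mp h1 (1/2) (by norm_num)
    filter_upwards [h2] with x hx
    intro h0
    rw [one_mul, h0, div_zero, Real.dist_eq] at hx
    norm_num at hx
  have hfpos : ∀ k, 0 < f k := by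
    have h3 : ∀ᶠ k : ℕ in atTop, L k ≠ 0 := tendsto_natCast_atTop_atTop.eventually hLpos
    obtain ⟨N, hN⟩ := eventually_atTop.mp (h3.and (eventually_ge_atTop 1))
    intro k
    have hNk : f (max k N) ≤ f k := hdec (le_max_left _ _)
    have h5 : 0 < f (max k N) := by
      obtain ⟨hL0, hub⟩ := hN (max k N) (le_max_right _ _)
      have ht := htail (max k N) hub
      have hne : f (max k N) ≠ 0 := by
        rw [ht]
        apply div_ne_zero hL0
        have : (1:ℝ) ≤ ((max k N : ℕ):ℝ) := by exact_mod_cast hub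
        positivity
      exact lt_of_le_of_ne (hfnn _) (Ne.symm hne)
    linarith
  -- summability
  have hfs : Summable (fun m => f (m+1)) := by
    have hiden : ∀ N : ℕ, ∑ m ∈ Finset.range N, f (m+1)
        = (∑ j ∈ Finset.range (N+1), (j:ℝ)*μ j) + (N:ℝ) * f (N+1) := by
      intro N
      induction N with
      | zero => simp
      | succ N ih =>
          rw [Finset.sum_range_succ, ih,
            Finset.sum_range_succ (f := fun j => (j:ℝ)*μ j) (n := N+1)]
          have hst := hstep (N+1)
          push_cast
          linear_combination ((N:ℝ)+1) * hst
    have hbound : ∀ N, ∑ m ∈ Finset.range N, f (m+1) ≤ 2 := by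
      intro N
      rw [hiden N]
      have h1 : ∑ j ∈ Finset.range (N+1), (j:ℝ)*μ j ≤ 1 := by
        rw [← hmean]
        exact Summable.sum_le_tsum _ (fun j _ => mul_nonneg (Nat.cast_nonneg j) (hpos j)) hmean_summable
      have h2 : (N:ℝ) * f (N+1) ≤ 1 := by
        have hs1 : Summable fun i : ℕ => (N:ℝ) * μ (N+1+i) := (hshift (N+1)).mul_left _
        have hs2 : Summable fun i : ℕ => ((N+1+i:ℕ):ℝ) * μ (N+1+i) := by
          have h := (summable_nat_add_iff (f := fun j : ℕ => (j:ℝ)*μ j) (N+1)).2 hmean_summable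
          exact h.congr fun i => by rw [Nat.add_comm]
        have e1 : (N:ℝ) * f (N+1) = ∑' i, (N:ℝ) * μ (N+1+i) := by
          rw [hfdef]
          show (N:ℝ) * tailSum μ (N+1) = _
          unfold tailSum
          rw [tsum_mul_left]
        have e2 : ∑' i, (N:ℝ) * μ (N+1+i) ≤ ∑' i, ((N+1+i:ℕ):ℝ) * μ (N+1+i) := by
          apply Summable.tsum_le_tsum _ hs1 hs2
          intro i
          have h : (N:ℝ) ≤ ((N+1+i:ℕ):ℝ) := by
            have : (N:ℕ) ≤ N+1+i := by omega
            exact_mod_cast this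
          exact mul_le_mul_of_nonneg_right h (hpos _)
        have e3 : ∑' i, ((N+1+i:ℕ):ℝ) * μ (N+1+i) ≤ 1 := by
          rw [← hmean]
          have h := Summable.sum_add_tsum_nat_add (f := fun j : ℕ => (j:ℝ)*μ j) (N+1) hmean_summable
          have hnn : 0 ≤ ∑ i ∈ Finset.range (N+1), (i:ℝ)*μ i :=
            Finset.sum_nonneg fun i _ => mul_nonneg (Nat.cast_nonneg i) (hpos i)
          have heq : ∑' i, ((N+1+i:ℕ):ℝ) * μ (N+1+i)
              = ∑' i, (fun j : ℕ => (j:ℝ)*μ j) (i+(N+1)) :=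
            tsum_congr fun i => by rw [Nat.add_comm (N+1) i]
          rw [heq]
          linarith
        rw [e1]
        linarith
      linarith
    exact summable_of_sum_range_le (fun m => (hfpos _).le) hbound
  -- L at integers
  have hLk : ∀ k : ℕ, 1 ≤ k → L k = (k:ℝ)^2 * f k := by
    intro k hk1
    have e1 : f k = L k / (k:ℝ)^2 := htail k hk1
    have hk0 : ((k:ℕ):ℝ) ≠ 0 := by
      have : (1:ℝ) ≤ ((k:ℕ):ℝ) := by exact_mod_cast hk1
      linarith
    rw [e1]
    field_simp
  -- q-limits
  have hq5 : ∀ q : ℕ, 1 ≤ q → Tendsto (fun k : ℕ => (q:ℝ)^2 * f (q*k) / f k) atTop (nhds 1) := by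
    intro q hq1
    have hq0 : (0:ℝ) < (q:ℝ) := by exact_mod_cast hq1
    have h1 := (hL q hq0).comp tendsto_natCast_atTop_atTop
    apply h1.congr'
    filter_upwards [eventually_ge_atTop 1] with k hk1
    show L ((q:ℝ) * (k:ℝ)) / L k = (q:ℝ)^2 * f (q*k) / f k
    have e3 : ((q*k:ℕ):ℝ) = (q:ℝ)*(k:ℝ) := by push_cast; ring
    have hqk1 : 1 ≤ q*k := Nat.one_le_iff_ne_zero.mpr (by positivity)
    have e4 : L ((q:ℝ)*(k:ℝ)) = ((q:ℝ)*(k:ℝ))^2 * f (q*k) := by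
      have h := hLk (q*k) hqk1
      rw [e3] at h
      exact h
    have e5 : L k = (k:ℝ)^2 * f k := hLk k hk1
    have hk0 : ((k:ℕ):ℝ) ≠ 0 := by
      have : (1:ℝ) ≤ ((k:ℕ):ℝ) := by exact_mod_cast hk1
      linarith
    rw [e4, e5]
    rw [show ((q:ℝ)*(k:ℝ))^2 * f (q*k) = (k:ℝ)^2 * ((q:ℝ)^2 * f (q*k)) by ring,
      show (k:ℝ)^2 * f k = (k:ℝ)^2 * f k from rfl]
    rw [mul_div_mul_left _ _ (by positivity : ((k:ℝ)^2) ≠ 0)]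
  have hcore := karamata_core f hfpos hdec hfs hq5
  constructor
  · apply hcore.congr'
    filter_upwards [eventually_ge_atTop 1] with k hk1
    have hk0 : ((k:ℕ):ℝ) ≠ 0 := by
      have : (1:ℝ) ≤ ((k:ℕ):ℝ) := by exact_mod_cast hk1
      linarith
    have hnum : ∑' m, f ((k+m)+1) = Sk f k := tsum_congr fun m => by congr 1; omega
    have hden : L k / (k:ℝ) = (k:ℝ) * f k := by
      rw [hLk k hk1]
      field_simp
    show Sk f k / ((k:ℝ) * f k) = (∑' m, f ((k+m)+1)) / (L k / (k:ℝ))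
    rw [hnum, hden]
  · -- second limit
    have hnum2 : ∀ k : ℕ, (∑' m, (2 * f (2*(k+m)+1) - μ (2*(k+m)+1))) = Sk f (2*k) := by
      intro k
      have hg : Summable (fun i => f (2*k+1+i)) := Sk_summable f hfs (2*k)
      have hge : Summable fun m : ℕ => f (2*k+1+2*m) := by
        have h := hg.comp_injective (fun a b hab => by have h2 : 2*a = 2*b := hab; omega : Function.Injective fun m : ℕ => 2*m)
        exact h.congr fun m => rfl
      have hgo : Summable fun m : ℕ => f (2*k+1+(2*m+1)) := by
        have h := hg.comp_injective (fun a b hab => by have h2 : 2*a+1 = 2*b+1 := hab; omega : Function.Injective fun m : ℕ => 2*m+1)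
        exact h.congr fun m => rfl
      have hterm : ∀ m : ℕ, 2 * f (2*(k+m)+1) - μ (2*(k+m)+1) = f (2*k+1+2*m) + f (2*k+1+(2*m+1)) := by
        intro m
        have h := hstep (2*(k+m)+1)
        have e1 : 2*k+1+2*m = 2*(k+m)+1 := by omega
        have e2 : 2*k+1+(2*m+1) = 2*(k+m)+1+1 := by omega
        rw [e1, e2]
        linarith
      calc ∑' m, (2 * f (2*(k+m)+1) - μ (2*(k+m)+1))
          = ∑' m, (f (2*k+1+2*m) + f (2*k+1+(2*m+1))) := tsum_congr hterm
        _ = (∑' m, f (2*k+1+2*m)) + ∑' m, f (2*k+1+(2*m+1)) := Summable.tsum_add hge hgo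
        _ = ∑' j, f (2*k+1+j) := tsum_even_add_odd (f := fun j => f (2*k+1+j)) hge hgo
        _ = Sk f (2*k) := rfl
    have ht2 : Tendsto (fun k : ℕ => 2*k) atTop atTop :=
      tendsto_atTop_mono (fun k => by simp only [id_eq]; omega) tendsto_id
    have h1 : Tendsto (fun k : ℕ => Sk f (2*k) / (((2*k:ℕ):ℝ) * f (2*k))) atTop (nhds 1) :=
      hcore.comp ht2
    have h2 : Tendsto (fun k : ℕ => ((2:ℕ):ℝ)^2 * f (2*k)/f k) atTop (nhds 1) := hq5 2 (by omega)
    have h3 := h1.mul h2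
    rw [mul_one] at h3
    apply h3.congr'
    filter_upwards [eventually_ge_atTop 1] with k hk1
    have hk0 : (0:ℝ) < ((k:ℕ):ℝ) := by exact_mod_cast (by omega : 0 < k)
    have hfk := hfpos k
    have hf2k := hfpos (2*k)
    have hden : L k / (2*(k:ℝ)) = ((k:ℝ) * f k)/2 := by
      rw [hLk k hk1]
      field_simp
    show Sk f (2*k) / (((2*k:ℕ):ℝ) * f (2*k)) * (((2:ℕ):ℝ)^2 * f (2*k)/f k)
        = (∑' m, (2 * f (2*(k+m)+1) - μ (2*(k+m)+1))) / (L k / (2*(k:ℝ)))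
    rw [hnum2 k, hden]
    have hc2 : ((2*k:ℕ):ℝ) = 2*(k:ℝ) := by push_cast; ring
    rw [hc2]
    field_simp
    ring
end
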